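/- arXiv:2107.03594 — 11 statements merged into one kernel-verified Lean document; each statement's English description precedes it below -/
import Mathlib

section
/- Let A be a primitive ring and R a central subring of A such that A is finitely generated as an R-module. Then R is a field. -/
/-- A ring is (right) primitive if it admits a faithful simple right module. -/
def IsPrimitiveRing (A : Type u) [Ring A] : Prop :=
  ∃ (V : Type u) (_ : AddCommGroup V) (_ : Module Aᵐᵒᵖ V),
    IsSimpleModule Aᵐᵒᵖ V ∧ ∀ a : A, (∀ v : V, MulOpposite.op a • v = 0) → a = 0

/-- If `A` is a primitive ring and `R` is a central subring of `A` (realized as a commutative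
ring mapping injectively into the center of `A` via the algebra map) such that `A` is finitely
generated as an `R`-module, then `R` is a field. -/
theorem stmt0 {R : Type v} {A : Type u} [CommRing R] [Ring A] [Algebra R A]
    (hinj : Function.Injective (algebraMap R A))
    [Module.Finite R A]
    (hprim : IsPrimitiveRing A) :
    IsField R := by
  obtain ⟨V, _, _, hsimp, hfaith⟩ := hprim
  letI : Module R V := Module.compHom V (algebraMap R Aᵐᵒᵖ)
  have hsmul : ∀ (r : R) (v : V), r • v = (algebraMap R Aᵐᵒᵖ r) • v := fun _ _ => rfl
  haveI : IsScalarTower R Aᵐᵒᵖ V := by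
    constructor
    intro r x v
    rw [Algebra.smul_def, mul_smul, hsmul]
  haveI : SMulCommClass R Aᵐᵒᵖ V := by
    constructor
    intro r x v
    rw [hsmul, ← mul_smul, Algebra.commutes r x, mul_smul, hsmul]
  -- V is nontrivial
  haveI : Nontrivial V := IsSimpleModule.nontrivial Aᵐᵒᵖ V
  obtain ⟨v, hv⟩ := exists_ne (0 : V)
  -- V is cyclic over Aᵐᵒᵖ
  have hspan : Submodule.span Aᵐᵒᵖ {v} = ⊤ := by
    rcases hsimp.1.2 (Submodule.span Aᵐᵒᵖ {v}) with h | h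
    · exact absurd (h ▸ Submodule.mem_span_singleton_self v) (by simp [hv])
    · exact h
  -- V is finitely generated over R
  haveI : Module.Finite R V := by
    have hsurj : Function.Surjective (fun a : A => (MulOpposite.op a) • v) := by
      intro w
      have : w ∈ Submodule.span Aᵐᵒᵖ {v} := hspan ▸ Submodule.mem_top
      rcases Submodule.mem_span_singleton.mp this with ⟨x, hx⟩
      exact ⟨x.unop, by simpa using hx⟩
    refine Module.Finite.of_surjective (R := R) (M := A) (
      { toFun := fun a : A => (MulOpposite.op a) • v
        map_add' := by intro a b; simp [add_smul]
        map_smul' := by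
          intro r a
          simp only [RingHom.id_apply, hsmul, ← mul_smul]
          congr 1
          rw [Algebra.smul_def, MulOpposite.op_mul, Algebra.commutes]
          rfl } : A →ₗ[R] V) hsurj
  -- faithfulness over R
  have Rfaith : ∀ r : R, (∀ w : V, r • w = 0) → r = 0 := by
    intro r h
    apply hinj
    rw [map_zero]
    exact hfaith _ fun w => h w
  -- nontriviality of R
  haveI : Nontrivial R := by
    constructor
    refine ⟨1, 0, fun h01 => ?_⟩
    have := Rfaith 1 (by rw [h01]; simp)
    have hv' : v = 0 := by
      have := Rfaith 1 (by rw [h01]; simp)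
      rw [← one_smul Aᵐᵒᵖ v, ← map_one (algebraMap R Aᵐᵒᵖ), ← hsmul, h01]
      simp
    exact hv hv'
  refine ⟨exists_pair_ne R, mul_comm, ?_⟩
  intro r hr
  -- multiplication by r is a nonzero Aᵐᵒᵖ-linear endomorphism of V
  let φ : V →ₗ[Aᵐᵒᵖ] V :=
    { toFun := fun w => r • w
      map_add' := by intro a b; simp
      map_smul' := by
        intro x w
        simpa using smul_comm r x w }
  have hφ : Function.Surjective φ := by
    rcases φ.bijective_or_eq_zero with h | h
    · exact h.2
    · exfalso
      apply hr
      apply Rfaith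
      intro w
      have := congrArg (fun f => f w) h
      simpa [φ] using this
  -- Nakayama
  have hle : (⊤ : Submodule R V) ≤ (Ideal.span {r}) • ⊤ := by
    intro w _
    obtain ⟨u, hu⟩ := hφ w
    rw [← hu]
    exact Submodule.smul_mem_smul (Ideal.mem_span_singleton_self r) Submodule.mem_top
  obtain ⟨s, hs1, hs0⟩ :=
    Submodule.exists_sub_one_mem_and_smul_eq_zero_of_fg_of_le_smul (Ideal.span {r}) ⊤
      (Module.Finite.fg_top) hle
  have hs : s = 0 := Rfaith s fun w => hs0 w Submodule.mem_top
  rw [hs, zero_sub] at hs1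
  have h1 : (1 : R) ∈ Ideal.span {r} := by
    have := neg_mem hs1
    simpa using this
  rcases Ideal.mem_span_singleton'.mp h1 with ⟨c, hc⟩
  exact ⟨c, by rw [mul_comm]; exact hc⟩
end

section
/- Let A be a ring and R a central subring of A such that A is finitely generated as an R-module. For every primitive ideal P of A, the contraction P ∩ R is a maximal ideal of R. -/
/-- The contraction `P ∩ R` of a two-sided ideal of `A` to the central subring `R`. -/
def TwoSidedIdeal.contract {R : Type v} {A : Type u} [CommRing R] [Ring A] [Algebra R A]
    (P : TwoSidedIdeal A) : Ideal R :=
  (TwoSidedIdeal.asIdeal P).comap (algebraMap R A)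

/-- Let `R` be a central subring of `A` such that `A` is a finitely generated `R`-module.
For every primitive (two-sided) ideal `P` of `A` (i.e. `A/P` is a primitive ring),
the contraction `P ∩ R` is a maximal ideal of `R`. -/
theorem stmt1 {R : Type v} {A : Type u} [CommRing R] [Ring A] [Algebra R A]
    (hinj : Function.Injective (algebraMap R A))
    [Module.Finite R A]
    (P : TwoSidedIdeal A) (hP : IsPrimitiveRing P.ringCon.Quotient) :
    (P.contract (R := R)).IsMaximal := by
  obtain ⟨V, _, _, hsimple, hfaith⟩ := hP
  set B := P.ringCon.Quotient with hB
  let π : A →+* B := P.ringCon.mk'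
  -- images of R are central in B
  have hcentral : ∀ (r : R) (b : B), π (algebraMap R A r) * b = b * π (algebraMap R A r) := by
    intro r b
    induction b using Quotient.inductionOn' with
    | h a =>
      show π (algebraMap R A r) * π a = π a * π (algebraMap R A r)
      rw [← map_mul, ← map_mul, Algebra.commutes]
  letI : Module R V := Module.compHom V ((π.comp (algebraMap R A)).toOpposite
    (fun x y => hcentral x (π (algebraMap R A y))))
  have hsmul_def : ∀ (r : R) (v : V),
      r • v = MulOpposite.op (π (algebraMap R A r)) • v := fun _ _ => rfl
  have hcomm : ∀ (r : R) (b : Bᵐᵒᵖ) (v : V), b • (r • v) = r • (b • v) := by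
    intro r b v
    rw [hsmul_def, hsmul_def, ← mul_smul, ← mul_smul]
    congr 1
    rw [← MulOpposite.op_unop b, ← MulOpposite.op_mul, ← MulOpposite.op_mul, hcentral]
  haveI := IsSimpleModule.nontrivial Bᵐᵒᵖ V
  obtain ⟨v0, hv0⟩ := exists_ne (0 : V)
  -- the Bᵐᵒᵖ-span of v0 is everything
  have hspan : Submodule.span Bᵐᵒᵖ {v0} = ⊤ := by
    rcases hsimple.eq_bot_or_eq_top (Submodule.span Bᵐᵒᵖ {v0}) with h | h
    · exact absurd ((Submodule.span_singleton_eq_bot).mp h) hv0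
    · exact h
  -- V is a finite R-module via the R-linear surjection a ↦ op (π a) • v0
  haveI : Module.Finite R V := by
    refine Module.Finite.of_surjective
      ({  toFun := fun a => MulOpposite.op (π a) • v0
          map_add' := fun x y => by
            show MulOpposite.op (π (x + y)) • v0
              = MulOpposite.op (π x) • v0 + MulOpposite.op (π y) • v0
            rw [map_add, MulOpposite.op_add, add_smul]
          map_smul' := fun r a => by
            show MulOpposite.op (π (r • a)) • v0 = r • (MulOpposite.op (π a) • v0)
            rw [Algebra.smul_def, map_mul, hcentral, MulOpposite.op_mul, mul_smul,
              hsmul_def] } :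
        A →ₗ[R] V) ?_
    intro v
    have hv : v ∈ Submodule.span Bᵐᵒᵖ {v0} := hspan ▸ Submodule.mem_top
    obtain ⟨b, hb⟩ := Submodule.mem_span_singleton.mp hv
    obtain ⟨a, ha⟩ : ∃ a : A, π a = b.unop :=
      Quotient.inductionOn' b.unop (fun a => ⟨a, rfl⟩)
    exact ⟨a, by simpa [ha] using hb⟩
  -- membership in the contraction
  have hmem : ∀ r : R, r ∈ P.contract (R := R) ↔ π (algebraMap R A r) = 0 := by
    intro r
    rw [TwoSidedIdeal.contract, Ideal.mem_comap, TwoSidedIdeal.mem_asIdeal,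
      TwoSidedIdeal.mem_iff]
    exact ⟨fun h => (RingCon.eq P.ringCon).mpr h, fun h => (RingCon.eq P.ringCon).mp h⟩
  have hq : ∀ r : R, (∀ v : V, r • v = 0) → r ∈ P.contract (R := R) := by
    intro r h
    rw [hmem]
    exact hfaith (π (algebraMap R A r)) (fun v => h v)
  have hqann : ∀ r : R, r ∈ P.contract (R := R) → ∀ v : V, r • v = 0 := by
    intro r hr v
    rw [hsmul_def, (hmem r).mp hr]
    simp
  have hne : P.contract (R := R) ≠ ⊤ := by
    intro h
    have h1 : (1 : R) ∈ P.contract (R := R) := h ▸ trivial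
    have := hqann 1 h1 v0
    rw [one_smul] at this
    exact hv0 this
  obtain ⟨m, hm, hqm⟩ := Ideal.exists_le_maximal _ hne
  -- m • V is a Bᵐᵒᵖ-submodule
  let W : Submodule Bᵐᵒᵖ V :=
    { carrier := (m • (⊤ : Submodule R V) : Submodule R V)
      add_mem' := fun ha hb => Submodule.add_mem _ ha hb
      zero_mem' := Submodule.zero_mem _
      smul_mem' := by
        intro b v hv
        refine Submodule.smul_induction_on hv ?_ ?_
        · intro r hr n _
          rw [hcomm]
          exact Submodule.smul_mem_smul hr trivial
        · intro x y hx hy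
          rw [smul_add]
          exact Submodule.add_mem _ hx hy }
  rcases hsimple.eq_bot_or_eq_top W with hW | hW
  · -- m • V = 0, so m ≤ contraction, hence equal, hence maximal
    have hmq : m ≤ P.contract (R := R) := by
      intro r hr
      apply hq
      intro v
      have hmem' : r • v ∈ W := by
        have h : r • v ∈ (m • (⊤ : Submodule R V) : Submodule R V) :=
          Submodule.smul_mem_smul hr Submodule.mem_top
        exact h
      rw [hW] at hmem'
      simpa using hmem'
    rwa [le_antisymm hmq hqm] at hm
  · -- m • V = V: contradiction via Nakayama
    exfalso
    have htop : (⊤ : Submodule R V) ≤ m • (⊤ : Submodule R V) := by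
      intro x _
      have : x ∈ W := hW ▸ trivial
      exact this
    obtain ⟨r, hr1, hr0⟩ :=
      Submodule.exists_sub_one_mem_and_smul_eq_zero_of_fg_of_le_smul m ⊤
        Module.Finite.fg_top htop
    have hrq : r ∈ m := hqm (hq r (fun v => hr0 v trivial))
    have : (1 : R) ∈ m := by
      have := m.sub_mem hrq hr1
      simpa using this
    exact hm.ne_top ((Ideal.eq_top_iff_one m).mpr this)
end

section
/- Let A be a ring and R a central subring of A such that A is finitely generated as an R-module. If P is a prime ideal of A such that P ∩ R is a maximal ideal of R, then P is a maximal ideal of A. -/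
/-- A two-sided ideal `P` of a ring `A` is prime if it is proper and whenever
`a x b ∈ P` for all `x`, then `a ∈ P` or `b ∈ P`. -/
def TwoSidedIdeal.IsPrimeTS {A : Type u} [Ring A] (P : TwoSidedIdeal A) : Prop :=
  P ≠ ⊤ ∧ ∀ a b : A, (∀ x : A, a * x * b ∈ P) → a ∈ P ∨ b ∈ P

section ArtinianPrime

variable {B : Type*} [Ring B] [IsArtinian B B]

/-- Brauer's lemma: in an artinian prime ring, every nonzero left ideal contains a
nonzero idempotent. -/
lemma exists_idem_of_ne_bot
    (hprime : ∀ a b : B, (∀ x : B, a * x * b = 0) → a = 0 ∨ b = 0)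
    (J : Submodule B B) (hJ : J ≠ ⊥) :
    ∃ e : B, e ∈ J ∧ e ≠ 0 ∧ e * e = e := by
  obtain ⟨L, ⟨hLJ, hL0⟩, hmin⟩ :=
    IsArtinian.set_has_minimal {L : Submodule B B | L ≤ J ∧ L ≠ ⊥} ⟨J, le_rfl, hJ⟩
  have hLmin : ∀ L' : Submodule B B, L' ≤ L → L' ≠ ⊥ → L' = L := by
    intro L' h1 h2
    by_contra hne
    exact hmin L' ⟨h1.trans hLJ, h2⟩ (lt_of_le_of_ne h1 hne)
  obtain ⟨c, hcL, hc0⟩ := Submodule.exists_mem_ne_zero_of_ne_bot hL0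
  have : ¬ ∀ x, c * x * c = 0 := fun h => by
    rcases hprime c c h with h' | h' <;> exact hc0 h'
  push_neg at this
  obtain ⟨x, hx⟩ := this
  set u := x * c with hu
  have huL : u ∈ L := L.smul_mem x hcL
  have hcu : c * u ≠ 0 := by rwa [hu, ← mul_assoc]
  have hu0 : u ≠ 0 := fun h => hcu (by rw [h, mul_zero])
  set ru : B →ₗ[B] B := LinearMap.toSpanSingleton B B u with hru
  have hruapp : ∀ y : B, ru y = y * u := fun y => rfl
  have hmap : Submodule.map ru L = L := by
    apply hLmin
    · rintro y ⟨z, hz, rfl⟩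
      rw [hruapp]
      exact L.smul_mem z huL
    · intro h
      apply hcu
      have : ru c ∈ Submodule.map ru L := Submodule.mem_map_of_mem hcL
      rw [h] at this
      simpa [hruapp] using this
  obtain ⟨e, heL, heu⟩ : ∃ e ∈ L, e * u = u := by
    have : u ∈ Submodule.map ru L := hmap.symm ▸ huL
    obtain ⟨e, he, h2⟩ := this
    exact ⟨e, he, h2⟩
  have hker : L ⊓ LinearMap.ker ru = ⊥ := by
    by_contra h
    have heq := hLmin _ inf_le_left h
    have : c ∈ LinearMap.ker ru := by
      have : c ∈ L ⊓ LinearMap.ker ru := heq.symm ▸ hcL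
      exact this.2
    rw [LinearMap.mem_ker, hruapp] at this
    exact hcu this
  have he2 : e * e = e := by
    have hmem : e * e - e ∈ L ⊓ LinearMap.ker ru := by
      refine Submodule.mem_inf.mpr ⟨L.sub_mem (L.smul_mem e heL) heL, ?_⟩
      rw [LinearMap.mem_ker, hruapp, sub_mul, mul_assoc, heu, heu, sub_self]
    rw [hker] at hmem
    exact sub_eq_zero.mp hmem
  have he0 : e ≠ 0 := fun h => hu0 (by rw [← heu, h, zero_mul])
  exact ⟨e, hLJ heL, he0, he2⟩

/-- In an artinian prime ring, a two-sided ideal containing a nonzero element contains `1`. -/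
lemma one_mem_of_ne_zero
    (hprime : ∀ a b : B, (∀ x : B, a * x * b = 0) → a = 0 ∨ b = 0)
    (I : TwoSidedIdeal B) (a : B) (haI : a ∈ I) (ha0 : a ≠ 0) : (1 : B) ∈ I := by
  set N : B → Submodule B B :=
    fun f => LinearMap.range (LinearMap.toSpanSingleton B B (1 - f)) with hN
  have hNmem : ∀ f y : B, y * (1 - f) ∈ N f := fun f y => ⟨y, rfl⟩
  have hNmem' : ∀ f z : B, z ∈ N f → ∃ y : B, y * (1 - f) = z := by
    rintro f z ⟨y, rfl⟩
    exact ⟨y, rfl⟩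
  have haI' : a ∈ TwoSidedIdeal.asIdeal I := by rwa [TwoSidedIdeal.mem_asIdeal]
  obtain ⟨e₀, he₀I, he₀0, he₀2⟩ := exists_idem_of_ne_bot hprime (TwoSidedIdeal.asIdeal I)
    (Submodule.ne_bot_iff _ |>.mpr ⟨a, haI', ha0⟩)
  obtain ⟨Ne, ⟨e, heI, he2, rfl⟩, hmin⟩ :=
    IsArtinian.set_has_minimal {Nf : Submodule B B | ∃ f, f ∈ I ∧ f * f = f ∧ Nf = N f}
      ⟨N e₀, e₀, (TwoSidedIdeal.mem_asIdeal.mp he₀I), he₀2, rfl⟩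
  have key : ∀ x ∈ I, x * (1 - e) = 0 := by
    by_contra h
    push_neg at h
    obtain ⟨a', ha'I, ha'0⟩ := h
    have hJ : (TwoSidedIdeal.asIdeal I ⊓ N e : Submodule B B) ≠ ⊥ := by
      refine (Submodule.ne_bot_iff _).mpr
        ⟨a' * (1 - e), Submodule.mem_inf.mpr ⟨?_, hNmem e a'⟩, ha'0⟩
      exact TwoSidedIdeal.mem_asIdeal.mpr (I.mul_mem_right _ _ ha'I)
    obtain ⟨f, hf, hf0, hf2⟩ := exists_idem_of_ne_bot hprime _ hJ
    have hfI : f ∈ I := TwoSidedIdeal.mem_asIdeal.mp hf.1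
    obtain ⟨y, hy⟩ := hNmem' e f hf.2
    have h1ee : (1 - e) * e = 0 := by rw [sub_mul, one_mul, he2, sub_self]
    have hfe : f * e = 0 := by rw [← hy, mul_assoc, h1ee, mul_zero]
    set e' := e + f - e * f with he'
    have he'I : e' ∈ I := I.sub_mem (I.add_mem heI hfI) (I.mul_mem_left _ _ hfI)
    have hfe' : f * e' = f := by
      rw [he', mul_sub, mul_add, hfe, hf2, zero_add, ← mul_assoc, hfe, zero_mul,
        sub_zero]
    have hee' : e * e' = e := by
      rw [he', mul_sub, mul_add, he2, ← mul_assoc, he2, add_sub_cancel_right]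
    have he'2 : e' * e' = e' := by
      conv_lhs => rw [he', sub_mul, add_mul, hee', hfe', mul_assoc, hfe', ← he']
    have he'e : e' * e = e := by
      rw [he', sub_mul, add_mul, he2, hfe, add_zero, mul_assoc, hfe, mul_zero, sub_zero]
    have hfactor : (1 - e') * (1 - e) = 1 - e' := by
      rw [mul_sub, mul_one, sub_mul, one_mul, he'e, sub_self, sub_zero]
    have hsub : N e' ≤ N e := by
      rintro z ⟨y', rfl⟩
      have : (y' : B) • (1 - e') = y' * (1 - e') := rfl
      refine ⟨y' * (1 - e'), ?_⟩
      show (y' * (1 - e')) * (1 - e) = y' * (1 - e')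
      rw [mul_assoc, hfactor]
    have hfNe : f ∈ N e := hf.2
    have hfNe' : f ∉ N e' := by
      intro hmem
      obtain ⟨y', hy'⟩ := hNmem' e' f hmem
      apply hf0
      calc f = f * e' := hfe'.symm
        _ = (y' * (1 - e')) * e' := by rw [hy']
        _ = y' * ((1 - e') * e') := by rw [mul_assoc]
        _ = 0 := by rw [sub_mul, one_mul, he'2, sub_self, mul_zero]
    have hlt : N e' < N e := lt_of_le_of_ne hsub (fun hEq => hfNe' (hEq ▸ hfNe))
    exact hmin (N e') ⟨e', he'I, he'2, rfl⟩ hlt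
  rcases hprime a (1 - e)
      (fun x => key (a * x) (I.mul_mem_right _ _ haI)) with h | h
  · exact absurd h ha0
  · have : (1 : B) = e := sub_eq_zero.mp h
    rw [this]
    exact heI

end ArtinianPrime

/-- Let `R` be a central subring of `A` such that `A` is a finitely generated `R`-module.
If `P` is a prime two-sided ideal of `A` whose contraction `P ∩ R` is a maximal ideal of `R`,
then `P` is a maximal two-sided ideal of `A`. -/
theorem stmt2 {R : Type v} {A : Type u} [CommRing R] [Ring A] [Algebra R A]
    (hinj : Function.Injective (algebraMap R A))
    [Module.Finite R A]
    (P : TwoSidedIdeal A) (hP : P.IsPrimeTS)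
    (hmax : (P.contract (R := R)).IsMaximal) :
    IsCoatom P := by
  have hP' : P ≠ ⊤ ∧ ∀ a b : A, (∀ x : A, a * x * b ∈ P) → a ∈ P ∨ b ∈ P := hP
  have hmax' : ((TwoSidedIdeal.asIdeal P).comap (algebraMap R A)).IsMaximal := hmax
  clear hP hmax
  classical
  set m : Ideal R := (TwoSidedIdeal.asIdeal P).comap (algebraMap R A) with hm
  set π : A →+* P.ringCon.Quotient := P.ringCon.mk' with hπ
  have hsurj : Function.Surjective π := fun q => Quot.inductionOn q fun x => ⟨x, rfl⟩
  have hker : ∀ x : A, π x = 0 ↔ x ∈ P := by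
    intro x
    rw [show (0 : P.ringCon.Quotient) = π 0 from (map_zero π).symm]
    exact (P.ringCon.eq).trans (P.mem_iff x).symm
  have hprime : ∀ a b : P.ringCon.Quotient,
      (∀ x : P.ringCon.Quotient, a * x * b = 0) → a = 0 ∨ b = 0 := by
    intro a b h
    obtain ⟨a, rfl⟩ := hsurj a
    obtain ⟨b, rfl⟩ := hsurj b
    have : ∀ x : A, a * x * b ∈ P := fun x => by
      rw [← hker, map_mul, map_mul]; exact h (π x)
    rcases hP'.2 a b this with h' | h'
    · exact Or.inl ((hker a).mpr h')
    · exact Or.inr ((hker b).mpr h')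
  letI : Algebra R P.ringCon.Quotient :=
    { toSMul := inferInstance
      algebraMap := π.comp (algebraMap R A)
      commutes' := by
        intro c x
        obtain ⟨y, rfl⟩ := hsurj x
        show π (algebraMap R A c) * π y = π y * π (algebraMap R A c)
        rw [← map_mul, ← map_mul, Algebra.commutes]
      smul_def' := by
        intro r x
        obtain ⟨y, rfl⟩ := hsurj x
        show π (r • y) = π (algebraMap R A r) * π y
        rw [← map_mul, Algebra.smul_def] }
  haveI := hmax'
  have hkerm : ∀ r ∈ m, (algebraMap R (P.ringCon.Quotient)) r = 0 := by
    intro r hr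
    have : algebraMap R A r ∈ P := by
      rw [hm, Ideal.mem_comap, TwoSidedIdeal.mem_asIdeal] at hr
      exact hr
    exact (hker _).mpr this
  letI : Algebra (R ⧸ m) P.ringCon.Quotient :=
    RingHom.toAlgebra' (Ideal.Quotient.lift m (algebraMap R (P.ringCon.Quotient)) hkerm) (by
      intro c x
      obtain ⟨r, rfl⟩ := Ideal.Quotient.mk_surjective c
      rw [Ideal.Quotient.lift_mk]
      exact Algebra.commutes r x)
  haveI : IsScalarTower R (R ⧸ m) P.ringCon.Quotient := by
    constructor
    intro r c b
    obtain ⟨s, rfl⟩ := Ideal.Quotient.mk_surjective c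
    obtain ⟨y, rfl⟩ := hsurj b
    show ((r • Ideal.Quotient.mk m s) • π y : P.ringCon.Quotient)
      = r • ((Ideal.Quotient.mk m s) • π y)
    have h1 : r • Ideal.Quotient.mk m s = Ideal.Quotient.mk m (r * s) := by
      rw [map_mul]
      rfl
    rw [h1]
    show Ideal.Quotient.lift m (algebraMap R _) hkerm (Ideal.Quotient.mk m (r * s)) * π y
      = r • (Ideal.Quotient.lift m (algebraMap R _) hkerm (Ideal.Quotient.mk m s) * π y)
    rw [Ideal.Quotient.lift_mk, Ideal.Quotient.lift_mk]
    show π (algebraMap R A (r * s)) * π y = r • (π (algebraMap R A s) * π y)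
    rw [← map_mul, ← map_mul]
    show π (algebraMap R A (r * s) * y) = π (r • (algebraMap R A s * y))
    rw [Algebra.smul_def, map_mul, ← mul_assoc, ← map_mul, map_mul (algebraMap R A) r s]
  haveI : Module.Finite R P.ringCon.Quotient := by
    refine Module.Finite.of_surjective
      ({ toFun := π, map_add' := map_add π, map_smul' := ?_ } : A →ₗ[R] P.ringCon.Quotient) hsurj
    intro r a
    rfl
  haveI : Module.Finite (R ⧸ m) P.ringCon.Quotient :=
    Module.Finite.of_restrictScalars_finite R (R ⧸ m) (P.ringCon.Quotient)
  haveI : IsArtinianRing (R ⧸ m) := by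
    letI := Ideal.Quotient.field m
    infer_instance
  haveI : IsArtinian (R ⧸ m) P.ringCon.Quotient := isArtinian_of_fg_of_artinian'
  haveI : IsArtinian (P.ringCon.Quotient) (P.ringCon.Quotient) :=
    isArtinian_of_tower (R ⧸ m) inferInstance
  constructor
  · exact hP'.1
  intro Q hQ
  obtain ⟨a, haQ, haP⟩ := SetLike.exists_of_lt hQ
  set I : TwoSidedIdeal (P.ringCon.Quotient) := TwoSidedIdeal.mk' (π '' Q)
    ⟨0, Q.zero_mem, map_zero π⟩
    (by rintro _ _ ⟨x, hx, rfl⟩ ⟨y, hy, rfl⟩; exact ⟨x + y, Q.add_mem hx hy, map_add π x y⟩)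
    (by rintro _ ⟨x, hx, rfl⟩; exact ⟨-x, Q.neg_mem hx, map_neg π x⟩)
    (by rintro x _ ⟨y, hy, rfl⟩
        obtain ⟨x, rfl⟩ := hsurj x
        exact ⟨x * y, Q.mul_mem_left x y hy, map_mul π x y⟩)
    (by rintro _ y ⟨x, hx, rfl⟩
        obtain ⟨y, rfl⟩ := hsurj y
        exact ⟨x * y, Q.mul_mem_right x y hx, map_mul π x y⟩) with hI
  have h1 : (1 : P.ringCon.Quotient) ∈ I := by
    refine one_mem_of_ne_zero hprime I (π a) ?_ ?_
    · rw [hI]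
      exact (TwoSidedIdeal.mem_mk' ..).mpr ⟨a, haQ, rfl⟩
    · intro h
      exact haP ((hker a).mp h)
  rw [hI] at h1
  replace h1 := (TwoSidedIdeal.mem_mk' ..).mp h1
  obtain ⟨q, hq, hq1⟩ := h1
  have h1Q : (1 : A) ∈ Q := by
    have : (1 : A) - q ∈ P := by
      rw [← hker, map_sub, map_one, hq1, sub_self]
    have h1q : (1 : A) - q ∈ Q := hQ.le this
    simpa using Q.add_mem h1q hq
  rw [eq_top_iff]
  intro x _
  simpa using Q.mul_mem_left x 1 h1Q
end

section
/- Let A be a ring and R a central subring of A such that A is finitely generated as an R-module. Then the map π : Spec A → Spec R given by P ↦ P ∩ R is surjective (lying over holds). -/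
section Aux

variable {R : Type v} {A : Type u} [CommRing R] [Ring A] [Algebra R A]

lemma mul_mem_smul_top' {p : Ideal R} {z : A} (a : A)
    (hz : z ∈ p • (⊤ : Submodule R A)) : a * z ∈ p • (⊤ : Submodule R A) := by
  refine Submodule.smul_induction_on hz (fun r hr n _ => ?_) (fun x y hx hy => ?_)
  · rw [mul_smul_comm]; exact Submodule.smul_mem_smul hr trivial
  · rw [mul_add]; exact Submodule.add_mem _ hx hy

lemma smul_top_mul_mem' {p : Ideal R} {z : A} (a : A)
    (hz : z ∈ p • (⊤ : Submodule R A)) : z * a ∈ p • (⊤ : Submodule R A) := by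
  refine Submodule.smul_induction_on hz (fun r hr n _ => ?_) (fun x y hx hy => ?_)
  · rw [smul_mul_assoc]; exact Submodule.smul_mem_smul hr trivial
  · rw [add_mul]; exact Submodule.add_mem _ hx hy

/-- The extension of an ideal `p` of `R` to a two-sided ideal of `A`. -/
def extTS (p : Ideal R) : TwoSidedIdeal A :=
  TwoSidedIdeal.mk' (↑(p • (⊤ : Submodule R A)) : Set A)
    (Submodule.zero_mem _)
    (fun hx hy => Submodule.add_mem _ hx hy)
    (fun hx => Submodule.neg_mem _ hx)
    (fun hy => mul_mem_smul_top' _ hy)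
    (fun hx => smul_top_mul_mem' _ hx)

lemma mem_extTS {p : Ideal R} {x : A} :
    x ∈ (extTS p : TwoSidedIdeal A) ↔ x ∈ p • (⊤ : Submodule R A) := by
  rw [extTS, TwoSidedIdeal.mem_mk']
  exact SetLike.mem_coe

/-- "Nakayama"/determinant-trick step: an element of the prime complement does not map into
the extension of `p`. -/
lemma not_mem_ext (hinj : Function.Injective (algebraMap R A)) [Module.Finite R A]
    {p : Ideal R} (hp : p.IsPrime) {r : R} (hr : r ∉ p) :
    algebraMap R A r ∉ p • (⊤ : Submodule R A) := by
  intro hmem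
  set φ : Module.End R A := LinearMap.mulLeft R (algebraMap R A r) with hφ
  have hrange : LinearMap.range φ ≤ p • (⊤ : Submodule R A) := by
    rintro _ ⟨x, rfl⟩
    exact smul_top_mul_mem' x hmem
  obtain ⟨q, hq_monic, -, hq_coeff, hq_eval⟩ :=
    LinearMap.exists_monic_and_coeff_mem_pow_and_aeval_eq_zero_of_range_le_smul R φ p hrange
  have h1 : (Polynomial.aeval φ q) 1 = 0 := by rw [hq_eval]; rfl
  rw [Polynomial.aeval_eq_sum_range] at h1
  simp only [LinearMap.coe_sum, Finset.sum_apply, LinearMap.smul_apply, hφ,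
    LinearMap.pow_mulLeft, LinearMap.mulLeft_apply, mul_one] at h1
  simp only [Algebra.smul_def, ← map_pow, ← map_mul, ← map_sum] at h1
  have h2 : (∑ i ∈ Finset.range (q.natDegree + 1), q.coeff i * r ^ i) = 0 := by
    apply hinj
    rw [h1, map_zero]
  rw [Finset.sum_range_succ, hq_monic.coeff_natDegree, one_mul] at h2
  have h3 : r ^ q.natDegree ∈ p := by
    have : r ^ q.natDegree = -(∑ i ∈ Finset.range q.natDegree, q.coeff i * r ^ i) := by
      linear_combination h2
    rw [this]
    refine p.neg_mem (Ideal.sum_mem _ fun i hi => p.mul_mem_right _ ?_)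
    have hi' : q.natDegree - i ≠ 0 := by
      rw [Finset.mem_range] at hi; omega
    exact Ideal.pow_le_self hi' (hq_coeff i)
  exact hr (hp.mem_of_pow_mem _ h3)

end Aux

/-- Lying over: if `R` is a central subring of `A` and `A` is a finitely generated `R`-module,
then the contraction map `π : Spec A → Spec R`, `P ↦ P ∩ R`, is surjective: every prime ideal
of `R` is the contraction of some prime two-sided ideal of `A`. -/
theorem stmt3 {R : Type v} {A : Type u} [CommRing R] [Ring A] [Algebra R A]
    (hinj : Function.Injective (algebraMap R A))
    [Module.Finite R A]
    (p : Ideal R) (hp : p.IsPrime) :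
    ∃ P : TwoSidedIdeal A, P.IsPrimeTS ∧ P.contract (R := R) = p := by
  classical
  set F : Set (TwoSidedIdeal A) :=
    {Q | extTS p ≤ Q ∧ ∀ r : R, r ∉ p → algebraMap R A r ∉ Q} with hF
  have hEF : extTS p ∈ F :=
    ⟨le_rfl, fun r hr hmem => not_mem_ext hinj hp hr (mem_extTS.1 hmem)⟩
  have hchain : ∀ c ⊆ F, IsChain (· ≤ ·) c → ∀ y ∈ c,
      ∃ ub ∈ F, ∀ z ∈ c, z ≤ ub := by
    intro c hcF hc Q0 hQ0
    set U : TwoSidedIdeal A := TwoSidedIdeal.mk' (⋃ Q ∈ c, (Q : Set A))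
      (Set.mem_biUnion hQ0 Q0.zero_mem)
      (by
        rintro x y hx hy
        obtain ⟨Q1, hQ1, hx⟩ := Set.mem_iUnion₂.1 hx
        obtain ⟨Q2, hQ2, hy⟩ := Set.mem_iUnion₂.1 hy
        rcases hc.total hQ1 hQ2 with h | h
        · exact Set.mem_biUnion hQ2 (Q2.add_mem (h hx) hy)
        · exact Set.mem_biUnion hQ1 (Q1.add_mem hx (h hy)))
      (by
        rintro x hx
        obtain ⟨Q1, hQ1, hx⟩ := Set.mem_iUnion₂.1 hx
        exact Set.mem_biUnion hQ1 (Q1.neg_mem hx))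
      (by
        rintro x y hy
        obtain ⟨Q1, hQ1, hy⟩ := Set.mem_iUnion₂.1 hy
        exact Set.mem_biUnion hQ1 (Q1.mul_mem_left x y hy))
      (by
        rintro x y hx
        obtain ⟨Q1, hQ1, hx⟩ := Set.mem_iUnion₂.1 hx
        exact Set.mem_biUnion hQ1 (Q1.mul_mem_right x y hx)) with hU
    have hub : ∀ z ∈ c, z ≤ U := by
      intro z hz
      rw [TwoSidedIdeal.le_iff]
      intro x hx
      rw [SetLike.mem_coe, hU, TwoSidedIdeal.mem_mk']
      exact Set.mem_biUnion hz hx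
    refine ⟨U, ⟨le_trans (hcF hQ0).1 (hub Q0 hQ0), ?_⟩, hub⟩
    intro r hr hmem
    rw [hU, TwoSidedIdeal.mem_mk'] at hmem
    obtain ⟨Q1, hQ1, hmem⟩ := Set.mem_iUnion₂.1 hmem
    exact (hcF hQ1).2 r hr hmem
  obtain ⟨P, -, hPF, hPmax⟩ := zorn_le_nonempty₀ F hchain (extTS p) hEF
  have h1p : (1 : R) ∉ p := fun h => hp.ne_top ((Ideal.eq_top_iff_one p).2 h)
  -- key step: any two-sided ideal strictly above P meets the image of the prime complement
  have key : ∀ a : A, a ∉ P →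
      ∃ r : R, r ∉ p ∧ algebraMap R A r ∈ P ⊔ TwoSidedIdeal.span {a} := by
    intro a ha
    by_contra hcon
    push_neg at hcon
    have hmemF : P ⊔ TwoSidedIdeal.span {a} ∈ F :=
      ⟨le_trans hPF.1 le_sup_left, fun r hr => hcon r hr⟩
    have hle : P ⊔ TwoSidedIdeal.span {a} ≤ P := hPmax hmemF le_sup_left
    exact ha (hle (TwoSidedIdeal.mem_sup_right
      (TwoSidedIdeal.subset_span (Set.mem_singleton a))))
  refine ⟨P, ⟨?_, ?_⟩, ?_⟩
  · -- P ≠ ⊤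
    intro h
    exact hPF.2 1 h1p (by rw [h]; exact TwoSidedIdeal.mem_top _)
  · -- primeness
    intro a b hab
    by_contra hcon
    push_neg at hcon
    obtain ⟨ha, hb⟩ := hcon
    obtain ⟨r1, hr1, hm1⟩ := key a ha
    obtain ⟨r2, hr2, hm2⟩ := key b hb
    rw [TwoSidedIdeal.mem_sup] at hm1 hm2
    obtain ⟨y1, hy1, z1, hz1, heq1⟩ := hm1
    obtain ⟨y2, hy2, z2, hz2, heq2⟩ := hm2
    -- z1 satisfies z1 * x * b ∈ P for all x
    set J : TwoSidedIdeal A := TwoSidedIdeal.mk' {w : A | ∀ x : A, w * x * b ∈ P}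
      (fun x => by simpa using P.zero_mem)
      (by
        rintro u v hu hv x
        have := P.add_mem (hu x) (hv x)
        simpa [add_mul] using this)
      (by
        rintro u hu x
        have := P.neg_mem (hu x)
        simpa [neg_mul] using this)
      (by
        rintro u v hv x
        have := P.mul_mem_left u (v * x * b) (hv x)
        simpa [mul_assoc] using this)
      (by
        rintro u v hu x
        have := hu (v * x)
        simpa [mul_assoc] using this) with hJ
    have haJ : a ∈ J := by rw [hJ, TwoSidedIdeal.mem_mk']; exact hab
    have hz1b : ∀ x : A, z1 * x * b ∈ P := by
      have := (TwoSidedIdeal.mem_span_iff.1 hz1) J (by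
        intro w hw
        rw [Set.mem_singleton_iff] at hw
        subst hw
        exact haJ)
      rwa [hJ, TwoSidedIdeal.mem_mk'] at this
    -- z1 * z2 ∈ P
    set K : TwoSidedIdeal A := TwoSidedIdeal.mk' {w : A | ∀ x : A, z1 * x * w ∈ P}
      (fun x => by simpa using P.zero_mem)
      (by
        rintro u v hu hv x
        have := P.add_mem (hu x) (hv x)
        simpa [mul_add] using this)
      (by
        rintro u hu x
        have := P.neg_mem (hu x)
        simpa [mul_neg] using this)
      (by
        rintro u v hv x
        have := hv (x * u)
        simpa [mul_assoc] using this)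
      (by
        rintro u v hu x
        have := P.mul_mem_right (z1 * x * u) v (hu x)
        simpa [mul_assoc] using this) with hK
    have hbK : b ∈ K := by rw [hK, TwoSidedIdeal.mem_mk']; exact hz1b
    have hz12 : z1 * z2 ∈ P := by
      have := (TwoSidedIdeal.mem_span_iff.1 hz2) K (by
        intro w hw
        rw [Set.mem_singleton_iff] at hw
        subst hw
        exact hbK)
      rw [hK, TwoSidedIdeal.mem_mk'] at this
      have h := this 1
      rwa [mul_one] at h
    have hprod : algebraMap R A (r1 * r2) ∈ P := by
      rw [map_mul, ← heq1, ← heq2]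
      have : (y1 + z1) * (y2 + z2) = y1 * (y2 + z2) + z1 * y2 + z1 * z2 := by noncomm_ring
      rw [this]
      exact P.add_mem (P.add_mem (P.mul_mem_right y1 _ hy1) (P.mul_mem_left z1 y2 hy2)) hz12
    have hr12 : r1 * r2 ∉ p := fun h => (hp.mem_or_mem h).elim hr1 hr2
    exact hPF.2 _ hr12 hprod
  · -- contraction equals p
    apply le_antisymm
    · intro r hr
      by_contra hrp
      exact hPF.2 r hrp hr
    · intro r hr
      show algebraMap R A r ∈ TwoSidedIdeal.asIdeal P
      rw [TwoSidedIdeal.mem_asIdeal]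
      refine hPF.1 (mem_extTS.2 ?_)
      rw [Algebra.algebraMap_eq_smul_one]
      exact Submodule.smul_mem_smul hr Submodule.mem_top
  done
end

section
/- Let A be a ring and R a central subring of A such that A is finitely generated as an R-module. Then the Jacobson radical of R equals J(A) ∩ R, where J(A) is the Jacobson radical of A. -/
open MulOpposite Polynomial

/-- In any ring, if `x` is in the Jacobson radical then `1 + x` is a unit. -/
lemma aux_isUnit_one_add {B : Type*} [Ring B] :
    ∀ {x : B}, x ∈ (⊥ : Ideal B).jacobson → IsUnit (1 + x) := by
  have left_inv : ∀ y : B, y ∈ (⊥ : Ideal B).jacobson → ∃ z, z * (1 + y) = 1 := by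
    intro y hy
    obtain ⟨z, hz⟩ := Ideal.mem_jacobson_iff.1 hy 1
    rw [Ideal.mem_bot, mul_one, sub_eq_zero] at hz
    exact ⟨z, by rw [mul_add, mul_one, add_comm]; exact hz⟩
  intro x hx
  obtain ⟨z, hz⟩ := left_inv x hx
  have hz' := hz
  have hzeq : z = 1 + -(z * x) := by
    rw [mul_add, mul_one] at hz'
    rw [← sub_eq_add_neg]
    exact eq_sub_of_add_eq hz'
  have hmem : -(z * x) ∈ (⊥ : Ideal B).jacobson :=
    neg_mem (Ideal.mul_mem_left _ z hx)
  obtain ⟨w, hw⟩ := left_inv _ hmem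
  rw [← hzeq] at hw
  have hweq : w = 1 + x := by
    calc w = w * (z * (1 + x)) := by rw [hz, mul_one]
    _ = (w * z) * (1 + x) := by rw [mul_assoc]
    _ = 1 + x := by rw [hw, one_mul]
  exact isUnit_iff_exists.2 ⟨z, by rw [← hweq]; exact hw, hz⟩

/-- If `A` is module-finite over its central subring `R` and `algebraMap R A x` is a unit,
then `x` is a unit in `R`. -/
lemma aux_isUnit_of_isUnit_algebraMap {R : Type v} {A : Type u} [CommRing R] [Ring A]
    [Algebra R A] (hinj : Function.Injective (algebraMap R A)) [Module.Finite R A]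
    {x : R} (h : IsUnit (algebraMap R A x)) : IsUnit x := by
  obtain ⟨u, hu⟩ := h
  set v : A := ((u⁻¹ : Aˣ) : A) with hv
  obtain ⟨p, pm, hp⟩ := IsIntegral.of_finite R v
  rcases Nat.eq_zero_or_eq_succ_pred p.natDegree with hn | hn
  · -- degree 0 : then p = 1 and A is trivial
    have hp1 : p = 1 := (Polynomial.Monic.natDegree_eq_zero pm).1 hn
    simp only [hp1, Polynomial.aeval_def, Polynomial.eval₂_one] at hp
    have : Subsingleton A := subsingleton_of_zero_eq_one hp.symm
    have : Subsingleton R := hinj.subsingleton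
    exact isUnit_of_subsingleton x
  · set m := p.natDegree - 1 with hm
    have hnm : p.natDegree = m + 1 := hn
    have hui : ∀ i, (u : A) ^ i = algebraMap R A (x ^ i) := by
      intro i; rw [map_pow, hu]
    have hvu : ∀ i, i ≤ m → v ^ i * (u : A) ^ m = (u : A) ^ (m - i) := by
      intro i hi
      have h1 : (u : A) ^ m = (u : A) ^ i * (u : A) ^ (m - i) := by
        rw [← pow_add, Nat.add_sub_cancel' hi]
      have h2 : v ^ i * (u : A) ^ i = 1 := by
        rw [hv, ← Units.val_pow_eq_pow_val, ← Units.val_pow_eq_pow_val, inv_pow,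
          ← Units.val_mul, inv_mul_cancel, Units.val_one]
      rw [h1, ← mul_assoc, h2, one_mul]
    have hsum := Polynomial.aeval_eq_sum_range (p := p) v
    rw [Polynomial.aeval_def, hp] at hsum
    have hmul : (0 : A) = ∑ i ∈ Finset.range (p.natDegree + 1),
        p.coeff i • (v ^ i * (u : A) ^ m) := by
      calc (0 : A) = (∑ i ∈ Finset.range (p.natDegree + 1), p.coeff i • v ^ i) * (u : A) ^ m := by
            rw [← hsum, zero_mul]
      _ = _ := by rw [Finset.sum_mul]; exact Finset.sum_congr rfl fun i _ => (smul_mul_assoc _ _ _)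
    rw [Finset.sum_range_succ] at hmul
    have hlast : p.coeff p.natDegree • (v ^ p.natDegree * (u : A) ^ m) = v := by
      have hc : p.coeff p.natDegree = 1 := pm.coeff_natDegree
      have : v ^ p.natDegree * (u : A) ^ m = v := by
        rw [hnm, pow_succ', mul_assoc, hvu m le_rfl, Nat.sub_self, pow_zero, mul_one]
      rw [hc, one_smul, this]
    rw [hlast] at hmul
    -- so v = - ∑_{i < natDegree} coeff i • u^(m-i), an element of the image of R
    set w : R := -∑ i ∈ Finset.range p.natDegree, p.coeff i * x ^ (m - i) with hw
    have hvw : v = algebraMap R A w := by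
      have : ∀ i ∈ Finset.range p.natDegree,
          p.coeff i • (v ^ i * (u : A) ^ m) = algebraMap R A (p.coeff i * x ^ (m - i)) := by
        intro i hi
        have him : i ≤ m := by
          have : i < p.natDegree := Finset.mem_range.1 hi
          omega
        rw [hvu i him, hui (m - i), Algebra.smul_def, ← map_mul]
      rw [hw, map_neg, map_sum, ← Finset.sum_congr rfl this]
      exact eq_neg_of_add_eq_zero_right hmul.symm
    have hxw : x * w = 1 := by
      apply hinj
      rw [map_mul, map_one, ← hu, ← hvw, hv, Units.mul_inv]
    exact IsUnit.of_mul_eq_one (a := x) w hxw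

/-- Let `R` be a central subring of `A` such that `A` is a finitely generated `R`-module.
Then the Jacobson radical of `R` equals `J(A) ∩ R`, where `J(A)` is the Jacobson radical of `A`
(the intersection of all maximal right ideals of `A`, here realized as left ideals of `Aᵐᵒᵖ`). -/
theorem stmt4 {R : Type v} {A : Type u} [CommRing R] [Ring A] [Algebra R A]
    (hinj : Function.Injective (algebraMap R A))
    [Module.Finite R A] :
    ∀ r : R, r ∈ (⊥ : Ideal R).jacobson ↔
      MulOpposite.op (algebraMap R A r) ∈ (⊥ : Ideal Aᵐᵒᵖ).jacobson := by
  have finop : Module.Finite R Aᵐᵒᵖ :=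
    Module.Finite.equiv (MulOpposite.opLinearEquiv R : A ≃ₗ[R] Aᵐᵒᵖ)
  have halg : ∀ r : R, MulOpposite.op (algebraMap R A r) = algebraMap R Aᵐᵒᵖ r := fun r => rfl
  intro r
  constructor
  · -- r ∈ J(R) → op (alg r) ∈ J(Aᵐᵒᵖ)
    intro hr
    rw [Ideal.jacobson, Submodule.mem_sInf]
    rintro M ⟨-, hM⟩
    by_contra hrM
    -- M ⊔ span {op (alg r)} = ⊤ since M is maximal
    obtain ⟨y, i, hiM, hyi⟩ := hM.exists_inv hrM
    -- Nakayama: ⊤ ≤ M' ⊔ J(R) • ⊤ forces M = ⊤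
    have key : (⊤ : Submodule R Aᵐᵒᵖ) ≤
        (M.restrictScalars R) ⊔ ((⊥ : Ideal R).jacobson • ⊤ : Submodule R Aᵐᵒᵖ) := by
      intro b _
      have hb : b = b * i + r • (b * y) := by
        have hcen : b * (y * op (algebraMap R A r)) = r • (b * y) := by
          rw [halg, ← mul_assoc, ← Algebra.commutes r (b * y), ← Algebra.smul_def]
        calc b = b * 1 := by rw [mul_one]
        _ = b * (y * op (algebraMap R A r) + i) := by rw [hyi]
        _ = b * i + r • (b * y) := by rw [mul_add, hcen, add_comm]
      rw [hb]
      exact Submodule.add_mem _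
        (Submodule.mem_sup_left (Ideal.mul_mem_left M b hiM))
        (Submodule.mem_sup_right (Submodule.smul_mem_smul hr Submodule.mem_top))
    have htop : (⊤ : Submodule R Aᵐᵒᵖ) ≤ M.restrictScalars R :=
      Submodule.le_of_le_smul_of_le_jacobson_bot Module.Finite.fg_top le_rfl key
    exact hM.ne_top (top_le_iff.1 fun a _ => htop Submodule.mem_top)
  · -- op (alg r) ∈ J(Aᵐᵒᵖ) → r ∈ J(R)
    intro hr
    rw [Ideal.mem_jacobson_bot]
    intro y
    have hmem : algebraMap R Aᵐᵒᵖ (r * y) ∈ (⊥ : Ideal Aᵐᵒᵖ).jacobson := by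
      have : algebraMap R Aᵐᵒᵖ (r * y) =
          algebraMap R Aᵐᵒᵖ y * algebraMap R Aᵐᵒᵖ r := by
        rw [← map_mul, mul_comm]
      rw [this]
      exact Ideal.mul_mem_left _ _ (by rw [← halg]; exact hr)
    have hunit : IsUnit (1 + algebraMap R Aᵐᵒᵖ (r * y)) := aux_isUnit_one_add hmem
    have hunit' : IsUnit (algebraMap R A (r * y + 1)) := by
      rw [← isUnit_op, halg, map_add, map_one, add_comm]
      exact hunit
    exact aux_isUnit_of_isUnit_algebraMap hinj hunit'
end

section
/- Let A be a ring and R a central subring of A such that A is finitely generated as an R-module. If R is a Jacobson ring, then A is a Jacobson ring, i.e., for every prime ideal P of A, the Jacobson radical of A/P is zero. -/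
set_option synthInstance.maxHeartbeats 1000000
set_option maxHeartbeats 1000000


section PP

variable {B : Type*} [Ring B]

/-- Partial products `j (n-1) * ⋯ * j 0` of a sequence. -/
private def pp (j : ℕ → B) : ℕ → B
  | 0 => 1
  | k + 1 => j k * pp j k

private lemma pp_congr {j j' : ℕ → B} {n : ℕ} (h : ∀ i < n, j i = j' i) :
    pp j n = pp j' n := by
  induction n with
  | zero => rfl
  | succ k ih =>
      rw [pp, pp, h k (by omega), ih (fun i hi => h i (by omega))]

private lemma pp_add (j : ℕ → B) (a b : ℕ) :
    pp j (a + b) = pp (fun i => j (i + b)) a * pp j b := by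
  induction a with
  | zero => simp [pp]
  | succ k ih =>
      have h : k + 1 + b = (k + b) + 1 := by omega
      rw [h, pp, ih, show pp (fun i => j (i + b)) (k + 1)
        = j (k + b) * pp (fun i => j (i + b)) k from rfl, mul_assoc]

end PP

section L1

variable {R B : Type*} [CommRing R] [Ring B] [Algebra R B]

private lemma absorb {m : Ideal R} (b : B) {x : B}
    (hx : x ∈ (m • ⊤ : Submodule R B)) : b * x ∈ (m • ⊤ : Submodule R B) := by
  refine Submodule.smul_induction_on hx (fun r hr y _ => ?_) (fun y z hy hz => ?_)
  · rw [mul_smul_comm]; exact Submodule.smul_mem_smul hr trivial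
  · rw [mul_add]; exact Submodule.add_mem _ hy hz

/-- Upgrade an `R`-submodule of an `R ⧸ m`-module to an `R ⧸ m`-submodule. -/
private def qsub {R : Type*} [CommRing R] (m : Ideal R) {W : Type*} [AddCommGroup W]
    [Module R W] [Module (R ⧸ m) W] [IsScalarTower R (R ⧸ m) W]
    (S : Submodule R W) : Submodule (R ⧸ m) W where
  carrier := S
  add_mem' := fun ha hb => S.add_mem ha hb
  zero_mem' := S.zero_mem
  smul_mem' := by
    rintro c x hx
    obtain ⟨r, rfl⟩ := Ideal.Quotient.mk_surjective c
    have h : (Ideal.Quotient.mk m r) • x = r • x := by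
      rw [← Ideal.Quotient.algebraMap_eq, algebraMap_smul]
    rw [h]
    exact S.smul_mem r hx

private lemma mem_qsub {R : Type*} [CommRing R] (m : Ideal R) {W : Type*} [AddCommGroup W]
    [Module R W] [Module (R ⧸ m) W] [IsScalarTower R (R ⧸ m) W]
    (S : Submodule R W) (x : W) : x ∈ qsub m S ↔ x ∈ S := Iff.rfl

/-- Key lemma 1: products of `#s` elements of the Jacobson radical lie in `m • ⊤`. -/
private lemma key1 [Module.Finite R B] (m : Ideal R) [hm : m.IsMaximal]
    (s : Finset B) (hs : Submodule.span R (s : Set B) = ⊤)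
    (j : ℕ → B) (hj : ∀ i, j i ∈ (⊥ : Ideal B).jacobson) :
    pp j s.card ∈ (m • ⊤ : Submodule R B) := by
  classical
  letI : Field (R ⧸ m) := Ideal.Quotient.field m
  set n := s.card with hn
  set V : Submodule R B := m • ⊤ with hV
  set W := B ⧸ V with hW
  set π : B →ₗ[R] W := V.mkQ with hπ
  -- W is a finite-dimensional (R ⧸ m)-vector space of dimension at most n
  have hspanR : Submodule.span R (π '' (s : Set B)) = ⊤ := by
    rw [← Submodule.map_span, hs, Submodule.map_top, Submodule.range_mkQ]
  haveI : Module.Finite (R ⧸ m) W := by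
    refine ⟨⟨s.image π, ?_⟩⟩
    rw [Finset.coe_image, eq_top_iff]
    intro w _
    have hw : w ∈ Submodule.span R (π '' (s : Set B)) := by rw [hspanR]; trivial
    exact Submodule.span_le_restrictScalars R (R ⧸ m) _ hw
  have hfr : Module.finrank (R ⧸ m) W ≤ n := by
    have hv : Submodule.span (R ⧸ m) (Set.range fun x : (s : Set B) => π x) = ⊤ := by
      rw [eq_top_iff]
      intro w _
      have : Set.range (fun x : (s : Set B) => π x) = π '' (s : Set B) := by
        ext y; simp
      rw [this]
      have hw : w ∈ Submodule.span R (π '' (s : Set B)) := by rw [hspanR]; trivial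
      exact Submodule.span_le_restrictScalars R (R ⧸ m) _ hw
    have := finrank_le_of_span_eq_top hv
    simpa [hn] using this
  -- the chain of submodules
  set C : ℕ → Submodule R B := fun k =>
    V ⊔ LinearMap.range (LinearMap.mulRight R (pp j k)) with hC
  set E : ℕ → Submodule (R ⧸ m) W := fun k => qsub m (Submodule.map π (C k)) with hE
  have hCmono : ∀ k, C (k + 1) ≤ C k := by
    intro k
    refine sup_le le_sup_left ?_
    rintro y ⟨b, rfl⟩
    exact Submodule.mem_sup_right ⟨b * j k, by simp [LinearMap.mulRight_apply, pp, mul_assoc]⟩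
  -- extraction: if `pp j k ∈ C (k+1)` then `pp j k ∈ V`
  have extract : ∀ k, pp j k ∈ C (k + 1) → pp j k ∈ V := by
    intro k hk
    obtain ⟨v, hv, y, hy, hsum⟩ := Submodule.mem_sup.1 hk
    obtain ⟨b, rfl⟩ := hy
    rw [LinearMap.mulRight_apply] at hsum
    obtain ⟨z, hz⟩ := Ideal.mem_jacobson_iff.1 (hj k) (-b)
    rw [Ideal.mem_bot] at hz
    have hz' : z * (1 - b * j k) = 1 := by
      have h2 : z * (1 - b * j k) = z * -b * j k + z := by noncomm_ring
      rw [h2]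
      exact sub_eq_zero.mp hz
    have h1 : (1 - b * j k) * pp j k = v := by
      have h3 : (1 - b * j k) * pp j k = pp j k - b * (j k * pp j k) := by noncomm_ring
      rw [h3, show j k * pp j k = pp j (k + 1) from rfl]
      rw [← hsum]; ring_nf
      abel
    have h4 : pp j k = z * v := by
      calc pp j k = (z * (1 - b * j k)) * pp j k := by rw [hz', one_mul]
        _ = z * ((1 - b * j k) * pp j k) := by rw [mul_assoc]
        _ = z * v := by rw [h1]
    rw [h4]
    exact absorb z hv
  -- propagate membership in V upwards
  have hup : ∀ k d, pp j k ∈ V → pp j (k + d) ∈ V := by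
    intro k d hk
    induction d with
    | zero => simpa using hk
    | succ e ih =>
        have : pp j (k + (e + 1)) = j (k + e) * pp j (k + e) := rfl
        rw [this]
        exact absorb _ ih
  by_contra hpn
  have hnotV : ∀ k ≤ n, pp j k ∉ V := by
    intro k hk hmem
    exact hpn (by simpa [Nat.add_sub_cancel' hk] using hup k (n - k) hmem)
  -- strict descent
  have hstep : ∀ k < n, E (k + 1) < E k := by
    intro k hk
    have hle : E (k + 1) ≤ E k := fun x hx => by
      rw [hE, mem_qsub] at hx ⊢
      exact Submodule.map_mono (hCmono k) hx
    refine lt_of_le_of_ne hle ?_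
    intro heq
    have hpk : π (pp j k) ∈ E k := by
      rw [hE, mem_qsub]
      exact ⟨pp j k, Submodule.mem_sup_right ⟨1, by simp [LinearMap.mulRight_apply]⟩, rfl⟩
    rw [← heq, hE, mem_qsub] at hpk
    obtain ⟨y, hy, hyeq⟩ := hpk
    have hdiff : pp j k - y ∈ V := by
      rw [Submodule.mkQ_apply, Submodule.mkQ_apply] at hyeq
      exact (Submodule.Quotient.eq V).mp hyeq.symm
    have hmem : pp j k ∈ C (k + 1) := by
      have : pp j k = (pp j k - y) + y := by abel
      rw [this]
      exact (C (k + 1)).add_mem (Submodule.mem_sup_left hdiff) hy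
    exact hnotV k (le_of_lt hk) (extract k hmem)
  -- dimension count
  have hdim : ∀ k ≤ n, Module.finrank (R ⧸ m) (E k) ≤ n - k := by
    intro k
    induction k with
    | zero =>
        intro _
        simpa using (Submodule.finrank_le (E 0)).trans hfr
    | succ l ih =>
        intro hl
        have h1 := Submodule.finrank_lt_finrank_of_lt (hstep l (by omega))
        have h2 := ih (by omega)
        omega
  have hEn : E n = ⊥ := by
    have h0 : Module.finrank (R ⧸ m) (E n) = 0 := by
      have := hdim n le_rfl; omega
    exact Submodule.finrank_eq_zero.mp h0
  have hpn' : π (pp j n) ∈ E n := by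
    rw [hE, mem_qsub]
    exact ⟨pp j n, Submodule.mem_sup_right ⟨1, by simp [LinearMap.mulRight_apply]⟩, rfl⟩
  rw [hEn, Submodule.mem_bot] at hpn'
  exact hpn (by rwa [hπ, Submodule.mkQ_apply, Submodule.Quotient.mk_eq_zero] at hpn')

end L1

section L2

/-- Key lemma 2: over a domain with trivial Jacobson radical, an element of a finitely
generated torsion-free module lying in `m • ⊤` for every maximal `m` is zero. -/
private lemma key2 {R M : Type*} [CommRing R] [IsDomain R]
    (hJ : (⊥ : Ideal R).jacobson = ⊥)
    [AddCommGroup M] [Module R M] [Module.Finite R M]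
    (htf : ∀ (r : R) (x : M), r • x = 0 → r = 0 ∨ x = 0)
    {t : M} (ht : ∀ m : Ideal R, m.IsMaximal → t ∈ (m • ⊤ : Submodule R M)) :
    t = 0 := by
  classical
  by_contra htne
  set S := nonZeroDivisors R with hS
  set F := FractionRing R with hF
  set W := LocalizedModule S M with hWdef
  set f : M →ₗ[R] W := LocalizedModule.mkLinearMap S M with hf
  have hft : f t ≠ 0 := by
    intro h
    obtain ⟨s, hs⟩ := (IsLocalizedModule.eq_zero_iff S f).1 h
    rcases htf (s : R) t hs with h1 | h2
    · exact nonZeroDivisors.coe_ne_zero s h1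
    · exact htne h2
  obtain ⟨φ, hφ, -⟩ := Submodule.exists_dual_map_eq_bot_of_notMem
    (p := (⊥ : Submodule F W)) (x := f t) (by simpa using hft) inferInstance
  set h : M →ₗ[R] F := (φ.restrictScalars R).comp f with hh
  obtain ⟨s, hs⟩ := Module.Finite.fg_top (R := R) (M := M)
  obtain ⟨b, hb⟩ := IsLocalization.exist_integer_multiples_of_finset S (s.image h)
  set h' : M →ₗ[R] F := (b : R) • h with hh'
  have hint : ∀ x : M, h' x ∈ LinearMap.range (Algebra.linearMap R F) := by
    have hsub : (⊤ : Submodule R M) ≤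
        Submodule.comap h' (LinearMap.range (Algebra.linearMap R F)) := by
      rw [← hs, Submodule.span_le]
      intro x hx
      have hx' : h x ∈ s.image h := Finset.mem_image_of_mem h hx
      obtain ⟨r, hr⟩ := hb (h x) hx'
      refine ⟨r, ?_⟩
      simpa [hh', Algebra.linearMap_apply, Submonoid.smul_def] using hr
    exact fun x => hsub trivial
  -- corestrict to R
  have hinj : Function.Injective (Algebra.linearMap R F) := by
    intro a b hab
    exact IsFractionRing.injective R F hab
  set e := LinearEquiv.ofInjective (Algebra.linearMap R F) hinj with he
  set g : M →ₗ[R] R := e.symm.toLinearMap.comp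
    (h'.codRestrict (LinearMap.range (Algebra.linearMap R F)) hint) with hg
  have hgspec : ∀ x : M, algebraMap R F (g x) = h' x := by
    intro x
    have h1 : e (g x) = h'.codRestrict _ hint x := by
      rw [hg]; simp
    have := congrArg (Subtype.val) h1
    simpa [he, Algebra.linearMap_apply] using this
  have hgt : g t ≠ 0 := by
    intro h0
    have h1 : h' t = 0 := by rw [← hgspec t, h0, map_zero]
    have h2 : h' t = algebraMap R F (b : R) * φ (f t) := by
      rw [hh', hh]
      simp [Algebra.smul_def]
    rw [h1] at h2
    have hb0 : algebraMap R F (b : R) ≠ 0 :=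
      IsFractionRing.to_map_ne_zero_of_mem_nonZeroDivisors b.2
    exact hφ (by
      rcases mul_eq_zero.mp h2.symm with h | h
      · exact absurd h hb0
      · exact h)
  -- choose a maximal ideal avoiding g t
  have hnm : ∃ m : Ideal R, m.IsMaximal ∧ g t ∉ m := by
    by_contra hcon
    push_neg at hcon
    have : g t ∈ (⊥ : Ideal R).jacobson := by
      rw [Ideal.jacobson]
      exact Submodule.mem_sInf.mpr fun J hJ' => hcon J hJ'.2
    rw [hJ, Ideal.mem_bot] at this
    exact hgt this
  obtain ⟨m, hm, hgm⟩ := hnm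
  -- but g t ∈ m
  have hmem : g t ∈ (m • ⊤ : Submodule R R) := by
    have h1 : g t ∈ Submodule.map g (m • ⊤ : Submodule R M) :=
      ⟨t, ht m hm, rfl⟩
    rw [Submodule.map_smul''] at h1
    exact Submodule.smul_mono le_rfl le_top h1
  have hmm : (m • ⊤ : Submodule R R) ≤ m := by
    rw [Submodule.smul_le]
    intro r hr x _
    exact m.mul_mem_right x hr
  exact hgm (hmm hmem)

end L2

/-- Let `R` be a central subring of `A` such that `A` is a finitely generated `R`-module.
If `R` is a Jacobson ring, then `A` is a Jacobson ring: for every prime two-sided ideal `P`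
of `A`, the Jacobson radical of the quotient ring `A/P` is zero. -/
theorem stmt5 {R : Type v} {A : Type u} [CommRing R] [Ring A] [Algebra R A]
    (hinj : Function.Injective (algebraMap R A))
    [Module.Finite R A] [IsJacobsonRing R] :
    ∀ P : TwoSidedIdeal A, P.IsPrimeTS →
      (⊥ : Ideal P.ringCon.Quotient).jacobson = ⊥ := by
  intro P hP
  obtain ⟨hPne, hPprime⟩ := hP
  set B := P.ringCon.Quotient with hB
  let φ : A →+* B := P.ringCon.mk'
  have hφsurj : Function.Surjective φ := fun b => Quot.inductionOn b fun a => ⟨a, rfl⟩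
  have hker : ∀ x : A, φ x = 0 ↔ x ∈ P := by
    intro x
    have h0 : (0 : B) = φ 0 := (map_zero φ).symm
    rw [h0]
    show (x : B) = (0 : A) ↔ _
    rw [RingCon.eq, P.rel_iff]
    simp
  haveI : Nontrivial B := by
    refine ⟨1, 0, fun h => hPne ?_⟩
    exact P.eq_top ((hker 1).mp (by simpa using h))
  -- primality in B
  have hBprime : ∀ a b : B, (∀ x : B, a * x * b = 0) → a = 0 ∨ b = 0 := by
    intro a b hab
    obtain ⟨a', rfl⟩ := hφsurj a
    obtain ⟨b', rfl⟩ := hφsurj b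
    rcases hPprime a' b' (fun x => (hker _).mp (by rw [map_mul, map_mul]; exact hab (φ x)))
      with h | h
    · exact Or.inl ((hker a').mpr h)
    · exact Or.inr ((hker b').mpr h)
  let ψ : R →+* B := φ.comp (algebraMap R A)
  have hcentral : ∀ (r : R) (x : B), ψ r * x = x * ψ r := by
    intro r x
    obtain ⟨a, rfl⟩ := hφsurj x
    show φ _ * φ a = φ a * φ _
    rw [← map_mul, ← map_mul, Algebra.commutes]
  set q : Ideal R := RingHom.ker ψ with hq
  haveI hqprime : q.IsPrime := by
    constructor
    · intro h
      have h1 : (1 : R) ∈ q := h ▸ Submodule.mem_top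
      have h2 : ψ 1 = 0 := RingHom.mem_ker.mp h1
      simp at h2
    · intro a b hab
      rw [hq, RingHom.mem_ker, map_mul] at hab
      rcases hBprime (ψ a) (ψ b) (fun x => by
        rw [mul_assoc, ← hcentral b x, ← mul_assoc, hab, zero_mul]) with h | h
      · exact Or.inl (RingHom.mem_ker.mpr h)
      · exact Or.inr (RingHom.mem_ker.mpr h)
  let R' := R ⧸ q
  let ψ' : R' →+* B := Ideal.Quotient.lift q ψ (fun a ha => RingHom.mem_ker.mp ha)
  have hψ'mk : ∀ r : R, ψ' (Ideal.Quotient.mk q r) = ψ r := fun r =>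
    Ideal.Quotient.lift_mk q _ _
  have hcentral' : ∀ (r : R') (x : B), ψ' r * x = x * ψ' r := by
    intro r x
    obtain ⟨r₀, rfl⟩ := Ideal.Quotient.mk_surjective r
    rw [hψ'mk]
    exact hcentral r₀ x
  letI : Algebra R' B := ψ'.toAlgebra' hcentral'
  have halg' : algebraMap R' B = ψ' := rfl
  have hsmul' : ∀ (r : R) (x : B), (Ideal.Quotient.mk q r) • x = ψ r * x := by
    intro r x
    rw [Algebra.smul_def, halg', hψ'mk]
  letI : Module.Finite R' B := by
    classical
    obtain ⟨t, ht⟩ := (Module.Finite.fg_top : (⊤ : Submodule R A).FG)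
    refine ⟨⟨t.image φ, ?_⟩⟩
    rw [Finset.coe_image, eq_top_iff]
    rintro x -
    obtain ⟨a, rfl⟩ := hφsurj x
    have hat : a ∈ Submodule.span R (t : Set A) := ht ▸ Submodule.mem_top
    induction hat using Submodule.span_induction with
    | mem y hy => exact Submodule.subset_span ⟨y, hy, rfl⟩
    | zero => rw [map_zero]; exact Submodule.zero_mem _
    | add y z _ _ hy hz => rw [map_add]; exact Submodule.add_mem _ hy hz
    | smul r y _ hy =>
        have h1 : φ (r • y) = (Ideal.Quotient.mk q r) • φ y := by
          rw [hsmul', Algebra.smul_def, map_mul]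
          rfl
        rw [h1]
        exact Submodule.smul_mem _ _ hy
  have hJ' : (⊥ : Ideal R').jacobson = ⊥ := by
    haveI : (⊥ : Ideal R').IsPrime := Ideal.bot_prime
    exact isJacobsonRing_iff_prime_eq.mp inferInstance ⊥ this
  have htf' : ∀ (r : R') (x : B), r • x = 0 → r = 0 ∨ x = 0 := by
    intro r x hrx
    obtain ⟨r₀, rfl⟩ := Ideal.Quotient.mk_surjective r
    rw [hsmul'] at hrx
    rcases hBprime x (ψ r₀) (fun y => by
      rw [mul_assoc, ← hcentral r₀ y, ← mul_assoc, ← hcentral r₀ x, hrx, zero_mul]) with h | h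
    · exact Or.inr h
    · exact Or.inl ((Ideal.Quotient.eq_zero_iff_mem).mpr (RingHom.mem_ker.mpr h))
  -- the key vanishing of products
  obtain ⟨s, hs⟩ := Module.Finite.fg_top (R := R') (M := B)
  set n := s.card with hn
  have good : ∀ (j : ℕ → B), (∀ i, j i ∈ (⊥ : Ideal B).jacobson) → pp j n = 0 := by
    intro j hj
    refine key2 (R := R') hJ' htf' (fun m hm => ?_)
    haveI := hm
    exact key1 (R := R') m s hs j hj
  -- products of any length ≥ n vanish; bring it down to length 2 by primality
  have goodmono : ∀ k d, (∀ (j : ℕ → B), (∀ i, j i ∈ (⊥ : Ideal B).jacobson) → pp j k = 0) →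
      (∀ (j : ℕ → B), (∀ i, j i ∈ (⊥ : Ideal B).jacobson) → pp j (k + d) = 0) := by
    intro k d hk
    induction d with
    | zero => simpa using hk
    | succ e ih =>
        intro j hj
        have : pp j (k + (e + 1)) = j (k + e) * pp j (k + e) := rfl
        rw [this, ih j hj, mul_zero]
  have goodstep : ∀ k',
      (∀ (j : ℕ → B), (∀ i, j i ∈ (⊥ : Ideal B).jacobson) → pp j (k' + 3) = 0) →
      (∀ (j : ℕ → B), (∀ i, j i ∈ (⊥ : Ideal B).jacobson) → pp j (k' + 2) = 0) := by
    intro k' hgood j hj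
    have hgood' : ∀ (j₂ : ℕ → B), (∀ i, j₂ i ∈ (⊥ : Ideal B).jacobson) →
        pp j₂ (2 * k' + 3) = 0 := by
      intro j₂ hj₂
      have h : 2 * k' + 3 = (k' + 3) + k' := by omega
      rw [h, pp_add, hgood _ (fun i => hj₂ _), zero_mul]
    suffices hzero : ∀ x : B, pp j (k' + 2) * x * pp j (k' + 2) = 0 by
      rcases hBprime _ _ hzero with h | h
      · exact h
      · exact h
    intro x
    set w : B := j 0 * (x * j (k' + 1)) with hw
    have hwJ : w ∈ (⊥ : Ideal B).jacobson :=
      Submodule.smul_mem _ (j 0) (Submodule.smul_mem _ x (hj (k' + 1)))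
    set j'' : ℕ → B := fun i =>
      if i < k' + 1 then j i else if i = k' + 1 then w else j (i - k' - 1) with hj''
    have hj''J : ∀ i, j'' i ∈ (⊥ : Ideal B).jacobson := by
      intro i
      rw [hj'']
      by_cases h1 : i < k' + 1
      · simpa [h1] using hj i
      · by_cases h2 : i = k' + 1
        · simpa [h1, h2] using hwJ
        · simpa [h1, h2] using hj (i - k' - 1)
    have key : pp j'' (2 * k' + 3) = pp j (k' + 2) * x * pp j (k' + 2) := by
      have hsplit : 2 * k' + 3 = (k' + 2) + (k' + 1) := by omega
      rw [hsplit, pp_add]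
      have hright : pp j'' (k' + 1) = pp j (k' + 1) :=
        pp_congr (fun i hi => by rw [hj'']; simp [hi])
      have hleft : pp (fun i => j'' (i + (k' + 1))) (k' + 2)
          = pp (fun i => j (i + 1)) (k' + 1) * w := by
        have e : pp (fun i => j'' (i + (k' + 1))) ((k' + 1) + 1)
            = pp (fun i => j'' ((i + 1) + (k' + 1))) (k' + 1) *
              pp (fun i => j'' (i + (k' + 1))) 1 := pp_add _ (k' + 1) 1
        have h2 : pp (fun i => j'' (i + (k' + 1))) 1 = w := by
          show j'' (0 + (k' + 1)) * 1 = w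
          rw [mul_one, hj'']
          simp
        have h3 : pp (fun i => j'' ((i + 1) + (k' + 1))) (k' + 1)
            = pp (fun i => j (i + 1)) (k' + 1) := by
          refine pp_congr (fun i hi => ?_)
          rw [hj'']
          have h4 : ¬ (i + 1 + (k' + 1) < k' + 1) := by omega
          have h5 : ¬ (i + 1 + (k' + 1) = k' + 1) := by omega
          have h6 : i + 1 + (k' + 1) - k' - 1 = i + 1 := by omega
          simp [h4, h5, h6]
        calc pp (fun i => j'' (i + (k' + 1))) (k' + 2)
            = pp (fun i => j'' ((i + 1) + (k' + 1))) (k' + 1) *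
              pp (fun i => j'' (i + (k' + 1))) 1 := e
          _ = pp (fun i => j (i + 1)) (k' + 1) * w := by rw [h2, h3]
      rw [hright, hleft]
      have hp1 : pp j (k' + 2) = pp (fun i => j (i + 1)) (k' + 1) * (j 0 * 1) :=
        pp_add j (k' + 1) 1
      have hp2 : pp j (k' + 2) = j (k' + 1) * pp j (k' + 1) := rfl
      rw [hw]
      calc pp (fun i => j (i + 1)) (k' + 1) * (j 0 * (x * j (k' + 1))) * pp j (k' + 1)
          = (pp (fun i => j (i + 1)) (k' + 1) * (j 0 * 1)) * x *
            (j (k' + 1) * pp j (k' + 1)) := by noncomm_ring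
        _ = pp j (k' + 2) * x * pp j (k' + 2) := by rw [← hp1, ← hp2]
    rw [← key]
    exact hgood' j'' hj''J
  have good2 : ∀ (j : ℕ → B), (∀ i, j i ∈ (⊥ : Ideal B).jacobson) → pp j 2 = 0 := by
    have hgen : ∀ d, (∀ (j : ℕ → B), (∀ i, j i ∈ (⊥ : Ideal B).jacobson) →
        pp j (d + 2) = 0) → (∀ (j : ℕ → B), (∀ i, j i ∈ (⊥ : Ideal B).jacobson) →
        pp j 2 = 0) := by
      intro d
      induction d with
      | zero => exact fun h => h
      | succ e ih =>
          exact fun h => ih (goodstep e (fun j hj => by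
            have h1 : e + 3 = e + 1 + 2 := by omega
            rw [h1]; exact h j hj))
    exact hgen n (fun j hj => goodmono n 2 good j hj)
  -- finish: every element of the radical is zero
  rw [eq_bot_iff]
  intro a ha
  rw [Ideal.mem_bot]
  suffices hzero : ∀ x : B, a * x * a = 0 by
    rcases hBprime a a hzero with h | h
    · exact h
    · exact h
  intro x
  -- a * x * a = 0
  have hxa : x * a ∈ (⊥ : Ideal B).jacobson := Submodule.smul_mem _ x ha
  set j'' : ℕ → B := fun i => if i = 0 then x * a else a with hj''
  have := good2 j'' (fun i => by
    rw [hj'']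
    by_cases h : i = 0 <;> simp [h, hxa, ha])
  have heq : pp j'' 2 = a * x * a := by
    show j'' 1 * (j'' 0 * 1) = a * x * a
    rw [hj'']
    simp [mul_assoc]
  rw [← heq]
  exact this
end

section
/- Let A be a ring and R a central subring such that A is finitely generated as an R-module, and suppose the contraction map π : Spec A → Spec R, P ↦ P ∩ R, is injective. Then for every two-sided ideal I of A, π(V(I)) = V(I ∩ R), where V denotes the closed set of primes containing the given ideal; consequently π is a closed map and a homeomorphism onto Spec R. -/
theorem TwoSidedIdeal.contract_isPrime {R : Type v} {A : Type u} [CommRing R] [Ring A]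
    [Algebra R A] {P : TwoSidedIdeal A} (hP : P.IsPrimeTS) :
    (P.contract (R := R)).IsPrime := by
  constructor
  · intro h
    have h1 : (1 : R) ∈ P.contract (R := R) := (Ideal.eq_top_iff_one _).1 h
    have h2 : (1 : A) ∈ P := by simpa [TwoSidedIdeal.contract] using h1
    exact hP.1 (P.one_mem_iff.1 h2)
  · intro x y hxy
    have hxy' : algebraMap R A x * algebraMap R A y ∈ P := by
      rw [← map_mul]
      exact hxy
    rcases hP.2 (algebraMap R A x) (algebraMap R A y) (fun z => by
      rw [show algebraMap R A x * z * algebraMap R A y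
            = z * (algebraMap R A x * algebraMap R A y) by
          rw [Algebra.commutes x z, mul_assoc]]
      exact P.mul_mem_left _ _ hxy') with h | h
    · exact Or.inl h
    · exact Or.inr h

/-- The prime spectrum of a (possibly noncommutative) ring: the set of prime two-sided
ideals. -/
def PrimeSpectrumNC (A : Type u) [Ring A] : Type u :=
  {P : TwoSidedIdeal A // P.IsPrimeTS}

/-- The closed set `V(I)` of prime two-sided ideals containing a given two-sided ideal `I`. -/
def zeroLocusNC {A : Type u} [Ring A] (I : TwoSidedIdeal A) : Set (PrimeSpectrumNC A) :=
  {P | I ≤ P.1}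

/-- The Zariski topology on the noncommutative prime spectrum, generated by the complements
of the sets `V(I)`. -/
instance {A : Type u} [Ring A] : TopologicalSpace (PrimeSpectrumNC A) :=
  TopologicalSpace.generateFrom {s | ∃ I : TwoSidedIdeal A, s = (zeroLocusNC I)ᶜ}

/-- The contraction map `π : Spec A → Spec R`. -/
def piSpec (R : Type v) {A : Type u} [CommRing R] [Ring A] [Algebra R A] :
    PrimeSpectrumNC A → PrimeSpectrum R :=
  fun P => ⟨P.1.contract, TwoSidedIdeal.contract_isPrime P.2⟩

section Aux

variable {R : Type v} {A : Type u} [CommRing R] [Ring A] [Algebra R A]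

lemma mem_contract {P : TwoSidedIdeal A} {r : R} :
    r ∈ P.contract (R := R) ↔ algebraMap R A r ∈ P := by
  simp [TwoSidedIdeal.contract, Ideal.mem_comap, TwoSidedIdeal.mem_asIdeal]

lemma contract_mono {P Q : TwoSidedIdeal A} (h : P ≤ Q) :
    P.contract (R := R) ≤ Q.contract := by
  intro r hr
  exact mem_contract.2 (h (mem_contract.1 hr))

lemma zl_top : zeroLocusNC (⊤ : TwoSidedIdeal A) = ∅ := by
  ext P
  simp only [zeroLocusNC, Set.mem_setOf_eq, Set.mem_empty_iff_false, iff_false]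
  intro h
  exact P.2.1 (top_le_iff.1 h)

lemma zl_inf (I J : TwoSidedIdeal A) :
    zeroLocusNC (I ⊓ J) = zeroLocusNC I ∪ zeroLocusNC J := by
  ext P
  simp only [zeroLocusNC, Set.mem_setOf_eq, Set.mem_union]
  constructor
  · intro h
    by_contra hc
    push_neg at hc
    obtain ⟨hI, hJ⟩ := hc
    obtain ⟨a, haI, haP⟩ := SetLike.not_le_iff_exists.1 hI
    obtain ⟨b, hbJ, hbP⟩ := SetLike.not_le_iff_exists.1 hJ
    rcases P.2.2 a b (fun x => by
      refine h ((TwoSidedIdeal.mem_inf A).2 ⟨?_, ?_⟩)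
      · exact I.mul_mem_right _ _ (I.mul_mem_right _ _ haI)
      · rw [mul_assoc]
        exact J.mul_mem_left _ _ (J.mul_mem_left _ _ hbJ)) with h' | h'
    · exact haP h'
    · exact hbP h'
  · rintro (h | h) <;> intro x hx
    · exact h ((TwoSidedIdeal.mem_inf A).1 hx).1
    · exact h ((TwoSidedIdeal.mem_inf A).1 hx).2

lemma isClosed_zeroLocusNC (I : TwoSidedIdeal A) : IsClosed (zeroLocusNC I) := by
  rw [← isOpen_compl_iff]
  exact TopologicalSpace.GenerateOpen.basic _ ⟨I, rfl⟩

lemma isClosedNC_iff (s : Set (PrimeSpectrumNC A)) :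
    IsClosed s ↔ ∃ I : TwoSidedIdeal A, s = zeroLocusNC I := by
  constructor
  · intro hs
    have key : ∀ u : Set (PrimeSpectrumNC A), IsOpen u →
        ∃ I : TwoSidedIdeal A, u = (zeroLocusNC I)ᶜ := by
      intro u hu
      induction hu with
      | basic v hv => exact hv
      | univ => exact ⟨⊤, by rw [zl_top, Set.compl_empty]⟩
      | inter u v _ _ ihu ihv =>
          obtain ⟨I, rfl⟩ := ihu
          obtain ⟨J, rfl⟩ := ihv
          exact ⟨I ⊓ J, by rw [zl_inf, Set.compl_union]⟩
      | sUnion ts _ ih =>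
          choose f hf using ih
          refine ⟨⨆ t : ts, f t.1 t.2, ?_⟩
          ext P
          simp only [Set.mem_sUnion, Set.mem_compl_iff, zeroLocusNC, Set.mem_setOf_eq,
            iSup_le_iff, not_forall]
          constructor
          · rintro ⟨t, ht, hPt⟩
            rw [hf t ht] at hPt
            exact ⟨⟨t, ht⟩, hPt⟩
          · rintro ⟨⟨t, ht⟩, h⟩
            exact ⟨t, ht, by rw [hf t ht]; exact h⟩
    obtain ⟨I, h⟩ := key sᶜ hs.isOpen_compl
    exact ⟨I, by rw [← compl_compl s, h, compl_compl]⟩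
  · rintro ⟨I, rfl⟩
    exact isClosed_zeroLocusNC I

lemma continuous_piSpec : Continuous (piSpec R (A := A)) := by
  rw [continuous_iff_isClosed]
  intro C hC
  rw [PrimeSpectrum.isClosed_iff_zeroLocus] at hC
  obtain ⟨s, rfl⟩ := hC
  have heq : piSpec R (A := A) ⁻¹' PrimeSpectrum.zeroLocus s
      = zeroLocusNC (TwoSidedIdeal.span (algebraMap R A '' s)) := by
    ext P
    simp only [Set.mem_preimage, PrimeSpectrum.mem_zeroLocus, zeroLocusNC, Set.mem_setOf_eq]
    constructor
    · intro h x hx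
      rw [TwoSidedIdeal.mem_span_iff] at hx
      refine hx P.1 ?_
      rintro _ ⟨r, hr, rfl⟩
      exact mem_contract.1 (h hr)
    · intro h r hr
      exact mem_contract.2 (h (TwoSidedIdeal.subset_span ⟨r, hr, rfl⟩))
  rw [heq]
  exact isClosed_zeroLocusNC _

lemma mul_mem_smulTop {q : Ideal R} (a : A) {w : A}
    (hw : w ∈ q • (⊤ : Submodule R A)) : a * w ∈ q • (⊤ : Submodule R A) := by
  refine Submodule.smul_induction_on (p := fun w => a * w ∈ q • (⊤ : Submodule R A)) hw ?_ ?_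
  · intro r hr n _
    rw [mul_smul_comm]
    exact Submodule.smul_mem_smul hr trivial
  · intro x y hx hy
    rw [mul_add]
    exact add_mem hx hy

lemma smulTop_mul_mem {q : Ideal R} (a : A) {w : A}
    (hw : w ∈ q • (⊤ : Submodule R A)) : w * a ∈ q • (⊤ : Submodule R A) := by
  refine Submodule.smul_induction_on (p := fun w => w * a ∈ q • (⊤ : Submodule R A)) hw ?_ ?_
  · intro r hr n _
    rw [smul_mul_assoc]
    exact Submodule.smul_mem_smul hr trivial
  · intro x y hx hy
    rw [add_mul]
    exact add_mem hx hy

open Polynomial in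
/-- The determinant-trick (Cayley–Hamilton) step: if `x ∈ R` lies in `I + qA` and
`I ∩ R ⊆ q` then `x ∈ q`. -/
lemma keyLemma [Module.Finite R A] (I : TwoSidedIdeal A) (q : Ideal R) (hq : q.IsPrime)
    (hIq : I.contract (R := R) ≤ q) {x : R}
    (hx : algebraMap R A x ∈
      (TwoSidedIdeal.asIdeal I).restrictScalars R ⊔ q • (⊤ : Submodule R A)) :
    x ∈ q := by
  set N : Ideal A := TwoSidedIdeal.asIdeal I with hN
  let M := A ⧸ N
  let φ : Module.End R M := algebraMap R (Module.End R M) x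
  have hrange : LinearMap.range φ ≤ q • (⊤ : Submodule R M) := by
    rintro _ ⟨m, rfl⟩
    obtain ⟨a, rfl⟩ := Submodule.Quotient.mk_surjective N m
    obtain ⟨n, hn, w, hw, hnw⟩ := Submodule.mem_sup.1 hx
    have hφ : φ (Submodule.Quotient.mk a) = Submodule.Quotient.mk (a * n) +
        Submodule.Quotient.mk (a * w) := by
      show x • (Submodule.Quotient.mk a : M) = _
      rw [← Submodule.Quotient.mk_add, ← mul_add, hnw,
        ← Submodule.Quotient.mk_smul]
      congr 1
      rw [Algebra.smul_def, Algebra.commutes]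
    rw [hφ]
    have h1 : (Submodule.Quotient.mk (a * n) : M) = 0 := by
      rw [Submodule.Quotient.mk_eq_zero]
      exact N.mul_mem_left a (Submodule.restrictScalars_mem R _ _ |>.1 hn)
    have h2 : (Submodule.Quotient.mk (a * w) : M) ∈ q • (⊤ : Submodule R M) := by
      refine Submodule.smul_induction_on
        (p := fun w => (Submodule.Quotient.mk (a * w) : M) ∈ q • (⊤ : Submodule R M)) hw ?_ ?_
      · intro r hr n' _
        rw [mul_smul_comm, Submodule.Quotient.mk_smul]
        exact Submodule.smul_mem_smul hr trivial
      · intro x1 x2 hx1 hx2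
        rw [mul_add, Submodule.Quotient.mk_add]
        exact add_mem hx1 hx2
    rw [h1, zero_add]
    exact h2
  obtain ⟨p, hpm, -, hpc, hpa⟩ :=
    LinearMap.exists_monic_and_coeff_mem_pow_and_aeval_eq_zero_of_range_le_smul R φ q hrange
  have h0 : algebraMap R (Module.End R M) (p.eval x) = 0 := by
    rw [← aeval_algebraMap_apply_eq_algebraMap_eval]
    exact hpa
  have heval : p.eval x ∈ I.contract (R := R) := by
    have h1 : (p.eval x) • (Submodule.Quotient.mk (1 : A) : M) = 0 := by
      rw [← Module.algebraMap_end_apply (R := R) (S := R), h0]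
      rfl
    rw [← Submodule.Quotient.mk_smul, Submodule.Quotient.mk_eq_zero] at h1
    rw [Algebra.smul_def, mul_one] at h1
    exact mem_contract.2 (TwoSidedIdeal.mem_asIdeal.1 h1)
  have hq1 : p.eval x ∈ q := hIq heval
  have hxn : x ^ p.natDegree ∈ q := by
    have hsum : p.eval x = ∑ i ∈ Finset.range (p.natDegree + 1), p.coeff i * x ^ i :=
      Polynomial.eval_eq_sum_range x
    have hxe : x ^ p.natDegree
        = p.eval x - ∑ i ∈ Finset.range p.natDegree, p.coeff i * x ^ i := by
      rw [hsum, Finset.sum_range_succ, hpm.coeff_natDegree, one_mul]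
      ring
    rw [hxe]
    refine Ideal.sub_mem q hq1 (Ideal.sum_mem q fun i hi => Ideal.mul_mem_right _ _ ?_)
    have hdi : p.natDegree - i ≠ 0 := by
      have := Finset.mem_range.1 hi
      omega
    exact Ideal.pow_le_self hdi (hpc i)
  exact hq.mem_of_pow_mem _ hxn

/-- Multiplication of elements of span {a} and span {b} lands in M when `aAb ⊆ M`. -/
lemma span_mul_span_mem {M : TwoSidedIdeal A} {a b : A}
    (hab : ∀ x : A, a * x * b ∈ M) {α β : A}
    (hα : α ∈ TwoSidedIdeal.span {a}) (hβ : β ∈ TwoSidedIdeal.span {b}) :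
    α * β ∈ M := by
  rw [TwoSidedIdeal.mem_span_iff_mem_addSubgroup_closure] at hα hβ
  refine AddSubgroup.closure_induction (p := fun α _ => α * β ∈ M) ?_ ?_ ?_ ?_ hα
  · intro α' hα'
    rw [Set.mem_mul] at hα'
    obtain ⟨y, hy, v, -, rfl⟩ := hα'
    rw [Set.mem_mul] at hy
    obtain ⟨u, -, w, hw, rfl⟩ := hy
    rw [Set.mem_singleton_iff] at hw
    subst hw
    refine AddSubgroup.closure_induction (p := fun β' _ => u * w * v * β' ∈ M) ?_ ?_ ?_ ?_ hβ
    · intro β' hβ'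
      rw [Set.mem_mul] at hβ'
      obtain ⟨y', hy', v', -, rfl⟩ := hβ'
      rw [Set.mem_mul] at hy'
      obtain ⟨u', -, w', hw', rfl⟩ := hy'
      rw [Set.mem_singleton_iff] at hw'
      subst hw'
      have heq : u * w * v * (u' * w' * v') = u * (w * (v * u') * w') * v' := by
        simp only [mul_assoc]
      rw [heq]
      exact M.mul_mem_right _ _ (M.mul_mem_left _ _ (hab (v * u')))
    · show u * w * v * (0 : A) ∈ M
      rw [mul_zero]; exact M.zero_mem
    · intro x y _ _ hx hy
      show u * w * v * (x + y) ∈ M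
      rw [mul_add]
      exact M.add_mem hx hy
    · intro x _ hx
      show u * w * v * (-x) ∈ M
      rw [mul_neg]
      exact M.neg_mem hx
  · show (0 : A) * β ∈ M
    rw [zero_mul]; exact M.zero_mem
  · intro x y _ _ hx hy
    show (x + y) * β ∈ M
    rw [add_mul]
    exact M.add_mem hx hy
  · intro x _ hx
    show (-x) * β ∈ M
    rw [neg_mul]
    exact M.neg_mem hx

/-- Noncommutative lying over, relative to a two-sided ideal `I`. -/
lemma exists_prime_over [Module.Finite R A] (I : TwoSidedIdeal A) (q : Ideal R)
    (hq : q.IsPrime) (hIq : I.contract (R := R) ≤ q) :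
    ∃ P : TwoSidedIdeal A, P.IsPrimeTS ∧ I ≤ P ∧ P.contract (R := R) = q := by
  classical
  set S : Set (TwoSidedIdeal A) :=
    {J | I ≤ J ∧ J.contract (R := R) ≤ q ∧ q ≤ J.contract (R := R)} with hS
  -- the starting ideal
  set J₀ : TwoSidedIdeal A := I ⊔ TwoSidedIdeal.span (algebraMap R A '' (q : Set R)) with hJ₀
  have hJ₀S : J₀ ∈ S := by
    refine ⟨le_sup_left, ?_, ?_⟩
    · -- key point: contraction of J₀ is contained in q
      intro x hxc
      have hx : algebraMap R A x ∈ J₀ := mem_contract.1 hxc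
      -- the submodule N ⊔ q•⊤ is a two-sided ideal containing J₀
      set W : Submodule R A :=
        (TwoSidedIdeal.asIdeal I).restrictScalars R ⊔ q • (⊤ : Submodule R A) with hW
      have hWl : ∀ (a : A) {y : A}, y ∈ W → a * y ∈ W := by
        intro a y hy
        obtain ⟨n, hn, w, hw, rfl⟩ := Submodule.mem_sup.1 hy
        rw [mul_add]
        refine Submodule.add_mem_sup ?_ (mul_mem_smulTop a hw)
        exact Submodule.restrictScalars_mem R _ _ |>.2
          ((TwoSidedIdeal.asIdeal I).mul_mem_left a (Submodule.restrictScalars_mem R _ _ |>.1 hn))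
      have hWr : ∀ (a : A) {y : A}, y ∈ W → y * a ∈ W := by
        intro a y hy
        obtain ⟨n, hn, w, hw, rfl⟩ := Submodule.mem_sup.1 hy
        rw [add_mul]
        refine Submodule.add_mem_sup ?_ (smulTop_mul_mem a hw)
        refine Submodule.restrictScalars_mem R _ _ |>.2 ?_
        have hnI : n ∈ I := TwoSidedIdeal.mem_asIdeal.1 (Submodule.restrictScalars_mem R _ _ |>.1 hn)
        exact TwoSidedIdeal.mem_asIdeal.2 (I.mul_mem_right _ _ hnI)
      let J' : TwoSidedIdeal A := TwoSidedIdeal.mk' (W : Set A)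
        W.zero_mem (fun h1 h2 => W.add_mem h1 h2) (fun h1 => W.neg_mem h1)
        (fun {x y} h => hWl x h) (fun {x y} h => hWr y h)
      have hmemJ' : ∀ {z : A}, z ∈ J' ↔ z ∈ W := by
        intro z
        rw [TwoSidedIdeal.mem_mk']
        rfl
      have hJ₀J' : J₀ ≤ J' := by
        refine sup_le ?_ ?_
        · intro z hz
          refine hmemJ'.2 (Submodule.mem_sup_left ?_)
          exact Submodule.restrictScalars_mem R _ _ |>.2 (TwoSidedIdeal.mem_asIdeal.2 hz)
        · intro z hz
          rw [TwoSidedIdeal.mem_span_iff] at hz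
          refine hz J' ?_
          rintro _ ⟨r, hr, rfl⟩
          refine hmemJ'.2 (Submodule.mem_sup_right ?_)
          rw [Algebra.algebraMap_eq_smul_one]
          exact Submodule.smul_mem_smul hr trivial
      exact keyLemma I q hq hIq (hmemJ'.1 (hJ₀J' hx))
    · intro r hr
      exact mem_contract.2 (TwoSidedIdeal.mem_sup_right
        (TwoSidedIdeal.subset_span ⟨r, hr, rfl⟩))
  -- Zorn's lemma
  have hub : ∀ c ⊆ S, IsChain (· ≤ ·) c → ∀ y ∈ c, ∃ ub ∈ S, ∀ z ∈ c, z ≤ ub := by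
    intro c hcS hchain y hyc
    refine ⟨TwoSidedIdeal.mk' (⋃ J ∈ c, (J : Set A))
      (Set.mem_biUnion hyc (TwoSidedIdeal.zero_mem y))
      (fun {x1 x2} h1 h2 => ?_) (fun {x1} h1 => ?_)
      (fun {x1 x2} h2 => ?_) (fun {x1 x2} h1 => ?_), ?_, ?_⟩
    · obtain ⟨J1, hJ1, hx1⟩ := Set.mem_iUnion₂.1 h1
      obtain ⟨J2, hJ2, hx2⟩ := Set.mem_iUnion₂.1 h2
      rcases hchain.total hJ1 hJ2 with h | h
      · exact Set.mem_biUnion hJ2 (J2.add_mem (h hx1) hx2)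
      · exact Set.mem_biUnion hJ1 (J1.add_mem hx1 (h hx2))
    · obtain ⟨J1, hJ1, hx1⟩ := Set.mem_iUnion₂.1 h1
      exact Set.mem_biUnion hJ1 (J1.neg_mem hx1)
    · obtain ⟨J2, hJ2, hx2⟩ := Set.mem_iUnion₂.1 h2
      exact Set.mem_biUnion hJ2 (J2.mul_mem_left _ _ hx2)
    · obtain ⟨J1, hJ1, hx1⟩ := Set.mem_iUnion₂.1 h1
      exact Set.mem_biUnion hJ1 (J1.mul_mem_right _ _ hx1)
    · -- membership in S
      have hyS := hcS hyc
      refine ⟨?_, ?_, ?_⟩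
      · intro z hz
        rw [TwoSidedIdeal.mem_mk']
        exact Set.mem_biUnion hyc (hyS.1 hz)
      · intro r hr
        have := mem_contract.1 hr
        rw [TwoSidedIdeal.mem_mk'] at this
        obtain ⟨J1, hJ1, hx1⟩ := Set.mem_iUnion₂.1 this
        exact (hcS hJ1).2.1 (mem_contract.2 hx1)
      · intro r hr
        refine mem_contract.2 ?_
        rw [TwoSidedIdeal.mem_mk']
        exact Set.mem_biUnion hyc (mem_contract.1 (hyS.2.2 hr))
    · -- upper bound
      intro J hJ z hz
      rw [TwoSidedIdeal.mem_mk']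
      exact Set.mem_biUnion hJ hz
  obtain ⟨M, hJ₀M, hMS, hMmax⟩ : ∃ M, J₀ ≤ M ∧ M ∈ S ∧ ∀ z ∈ S, M ≤ z → z ≤ M := by
    obtain ⟨M, h1, h2⟩ := zorn_le_nonempty₀ S hub J₀ hJ₀S
    exact ⟨M, h1, h2.1, fun z hz hMz => h2.2 hz hMz⟩
  refine ⟨M, ⟨?_, ?_⟩, hJ₀S.1.trans hJ₀M, le_antisymm hMS.2.1 hMS.2.2⟩
  · -- M ≠ ⊤
    intro hMtop
    have h1 : (1 : R) ∈ q := hMS.2.1 (mem_contract.2 (by rw [hMtop]; exact trivial))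
    exact hq.ne_top ((Ideal.eq_top_iff_one q).2 h1)
  · -- primality
    intro a b hab
    by_contra hc
    push_neg at hc
    obtain ⟨haM, hbM⟩ := hc
    -- M ⊔ span {a} is strictly bigger, so its contraction is not contained in q
    have hnotle : ∀ z : A, z ∉ M →
        ∃ s : R, s ∉ q ∧ algebraMap R A s ∈ M ⊔ TwoSidedIdeal.span {z} := by
      intro z hzM
      have hMz : M ⊔ TwoSidedIdeal.span {z} ∉ S := by
        intro hmem
        exact hzM (hMmax _ hmem le_sup_left
          (TwoSidedIdeal.mem_sup_right (TwoSidedIdeal.subset_span rfl)))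
      have h1 : I ≤ M ⊔ TwoSidedIdeal.span {z} := (hMS.1).trans le_sup_left
      have h3 : q ≤ (M ⊔ TwoSidedIdeal.span {z}).contract (R := R) :=
        hMS.2.2.trans (contract_mono le_sup_left)
      by_contra hno
      push_neg at hno
      refine hMz ⟨h1, ?_, h3⟩
      intro s hs
      by_contra hsq
      exact hno s hsq (mem_contract.1 hs)
    obtain ⟨s, hsq, hsM⟩ := hnotle a haM
    obtain ⟨t, htq, htM⟩ := hnotle b hbM
    -- algebraMap (s * t) ∈ M
    have hst : algebraMap R A (s * t) ∈ M := by
      rw [map_mul]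
      obtain ⟨m, hm, α, hα, hmα⟩ := TwoSidedIdeal.mem_sup.1 hsM
      obtain ⟨m', hm', β, hβ, hmβ⟩ := TwoSidedIdeal.mem_sup.1 htM
      rw [← hmα, ← hmβ]
      have hexp : (m + α) * (m' + β) = m * (m' + β) + α * m' + α * β := by noncomm_ring
      rw [hexp]
      refine M.add_mem (M.add_mem ?_ ?_) ?_
      · exact M.mul_mem_right _ _ hm
      · exact M.mul_mem_left _ _ hm'
      · exact span_mul_span_mem hab hα hβ
    have : s * t ∈ q := hMS.2.1 (mem_contract.2 hst)
    rcases hq.mem_or_mem this with h | h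
    · exact hsq h
    · exact htq h

end Aux

/-- Let `R` be a central subring of `A` with `A` a finitely generated `R`-module, and suppose
the contraction map `π : Spec A → Spec R`, `P ↦ P ∩ R`, is injective. Then for every two-sided
ideal `I` of `A` we have `π(V(I)) = V(I ∩ R)`; consequently `π` is a closed map and a
homeomorphism onto `Spec R`. -/
theorem stmt7 {R : Type v} {A : Type u} [CommRing R] [Ring A] [Algebra R A]
    (hinj : Function.Injective (algebraMap R A))
    [Module.Finite R A]
    (hπinj : Function.Injective (piSpec R (A := A))) :
    (∀ I : TwoSidedIdeal A,
      piSpec R '' zeroLocusNC I = PrimeSpectrum.zeroLocus (I.contract (R := R) : Set R)) ∧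
    IsClosedMap (piSpec R (A := A)) ∧ IsHomeomorph (piSpec R (A := A)) := by
  have himg : ∀ I : TwoSidedIdeal A,
      piSpec R '' zeroLocusNC I = PrimeSpectrum.zeroLocus (I.contract (R := R) : Set R) := by
    intro I
    ext q
    constructor
    · rintro ⟨P, hP, rfl⟩
      rw [PrimeSpectrum.mem_zeroLocus]
      intro r hr
      exact mem_contract.2 (hP (mem_contract.1 hr))
    · intro hq
      rw [PrimeSpectrum.mem_zeroLocus] at hq
      have hle : I.contract (R := R) ≤ q.asIdeal := hq
      obtain ⟨P, hPprime, hIP, hPc⟩ := exists_prime_over I q.asIdeal q.isPrime hle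
      exact ⟨⟨P, hPprime⟩, hIP, PrimeSpectrum.ext hPc⟩
  have hclosed : IsClosedMap (piSpec R (A := A)) := by
    intro C hC
    obtain ⟨I, rfl⟩ := (isClosedNC_iff C).1 hC
    rw [himg I]
    exact PrimeSpectrum.isClosed_zeroLocus _
  have hsurj : Function.Surjective (piSpec R (A := A)) := by
    intro q
    have h2 : (⊥ : TwoSidedIdeal A).contract (R := R) = ⊥ := by
      ext r
      simp only [mem_contract, TwoSidedIdeal.mem_bot, Ideal.mem_bot]
      constructor
      · intro h
        exact hinj (by rw [h, map_zero])
      · rintro rfl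
        exact map_zero _
    have hmem : q ∈ piSpec R '' zeroLocusNC (⊥ : TwoSidedIdeal A) := by
      rw [himg ⊥, h2, PrimeSpectrum.zeroLocus_bot]
      trivial
    obtain ⟨P, -, hPq⟩ := hmem
    exact ⟨P, hPq⟩
  refine ⟨himg, hclosed, ?_⟩
  rw [isHomeomorph_iff_continuous_isClosedMap_bijective]
  exact ⟨continuous_piSpec, hclosed, hπinj, hsurj⟩
end

section
/- Let R be a commutative ring, A an R-algebra finitely presented as an R-module, and suppose A_p is a local ring for every prime p of R. If M is a finitely presented right A-module, then the set U = { p ∈ Spec R : M_p is a projective A_p-module } is open in Spec R. -/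
open TensorProduct

section

variable {R : Type u} {A : Type u} [CommRing R] [Ring A] [Algebra R A]
variable (M : Type u) [AddCommGroup M] [Module R M] [Module Aᵐᵒᵖ M]
  [SMulCommClass Aᵐᵒᵖ R M] [IsScalarTower R Aᵐᵒᵖ M]
variable (Rp : Type u) [CommRing Rp] [Algebra R Rp]

/-- The action of an element of `Aᵐᵒᵖ` on `M`, as an `R`-linear endomorphism. -/
def opSmulEnd (b : Aᵐᵒᵖ) : M →ₗ[R] M where
  toFun m := b • m
  map_add' := smul_add b
  map_smul' r m := (smul_comm b r m)

/-- The action of `Aᵐᵒᵖ` on the localized (base-changed) module `Rp ⊗[R] M`, acting on the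
second tensor factor. -/
noncomputable def opSmulHom : Aᵐᵒᵖ →+* Module.End R (Rp ⊗[R] M) where
  toFun b := LinearMap.lTensor Rp (opSmulEnd M b)
  map_one' := LinearMap.ext fun z => by
    induction z with
    | zero => simp
    | tmul x m => simp [opSmulEnd]
    | add x y hx hy => simp_all
  map_mul' b b' := LinearMap.ext fun z => by
    induction z with
    | zero => simp
    | tmul x m => simp [opSmulEnd, mul_smul]
    | add x y hx hy => simp_all
  map_zero' := LinearMap.ext fun z => by
    induction z with
    | zero => simp
    | tmul x m => simp [opSmulEnd]
    | add x y hx hy => simp_all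
  map_add' b b' := LinearMap.ext fun z => by
    induction z with
    | zero => simp
    | tmul x m => simp [opSmulEnd, add_smul, TensorProduct.tmul_add]
    | add x y hx hy => simp_all; abel

/-- The right `A`-module structure (i.e. left `Aᵐᵒᵖ`-module structure) on `Rp ⊗[R] M`. -/
noncomputable instance opModule : Module Aᵐᵒᵖ (Rp ⊗[R] M) :=
  Module.compHom _ (opSmulHom (R := R) (A := A) M Rp)

theorem op_smul_tmul (b : Aᵐᵒᵖ) (x : Rp) (m : M) :
    b • (x ⊗ₜ[R] m) = x ⊗ₜ (b • m) := rfl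

theorem op_smul_def (b : Aᵐᵒᵖ) (z : Rp ⊗[R] M) :
    b • z = LinearMap.lTensor Rp (opSmulEnd (R := R) M b) z := rfl

noncomputable instance : IsScalarTower R Aᵐᵒᵖ (Rp ⊗[R] M) := by
  constructor
  intro r b z
  induction z with
  | zero => simp [op_smul_def]
  | tmul x m =>
      rw [op_smul_tmul, op_smul_tmul, smul_assoc, TensorProduct.tmul_smul]
  | add x y hx hy => simp only [smul_add, hx, hy]

noncomputable instance : SMulCommClass Aᵐᵒᵖ Rp (Rp ⊗[R] M) := by
  constructor
  intro b x z
  induction z with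
  | zero => simp [op_smul_def]
  | tmul y m =>
      rw [TensorProduct.smul_tmul', op_smul_tmul, op_smul_tmul,
        TensorProduct.smul_tmul']
  | add z w hz hw => simp only [smul_add, hz, hw]

/-- The module structure on `M_p := Rp ⊗[R] M` over the central localization
`(A_p)ᵐᵒᵖ = Aᵐᵒᵖ ⊗[R] Rp`, making `M_p` a right `A_p`-module. -/
noncomputable instance : Module (Aᵐᵒᵖ ⊗[R] Rp) (Rp ⊗[R] M) :=
  TensorProduct.Algebra.module

end

set_option linter.unusedSectionVars false
set_option synthInstance.maxHeartbeats 1000000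
set_option maxHeartbeats 2000000

section Aux

variable {R : Type u} {A : Type u} [CommRing R] [Ring A] [Algebra R A]

instance : SMulCommClass Aᵐᵒᵖ R Aᵐᵒᵖ := ⟨fun b r x => (smul_comm r b x).symm⟩

variable {X : Type u} [AddCommGroup X] [Module R X] [Module Aᵐᵒᵖ X]
  [SMulCommClass Aᵐᵒᵖ R X] [IsScalarTower R Aᵐᵒᵖ X]
variable {Y : Type u} [AddCommGroup Y] [Module R Y] [Module Aᵐᵒᵖ Y]
  [SMulCommClass Aᵐᵒᵖ R Y] [IsScalarTower R Aᵐᵒᵖ Y]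
variable (Rq : Type u) [CommRing Rq] [Algebra R Rq]

lemma bq_smul_def (b : Aᵐᵒᵖ) (y : Rq) (z : Rq ⊗[R] X) :
    (b ⊗ₜ[R] y) • z = b • (y • z) := TensorProduct.Algebra.smul_def b y z

lemma op_smul_one_tmul (b : Aᵐᵒᵖ) (z : Rq ⊗[R] X) : (b ⊗ₜ[R] (1 : Rq)) • z = b • z := by
  rw [bq_smul_def, one_smul]

lemma one_tmul_smul (y : Rq) (z : Rq ⊗[R] X) : ((1 : Aᵐᵒᵖ) ⊗ₜ[R] y) • z = y • z := by
  rw [bq_smul_def, one_smul]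

/-- Construct a `Aᵐᵒᵖ ⊗[R] Rq`-linear map from an additive map commuting with the action of
pure tensors. -/
def LinearMap.ofBq {P Q : Type u} [AddCommGroup P] [AddCommGroup Q]
    [Module (Aᵐᵒᵖ ⊗[R] Rq) P] [Module (Aᵐᵒᵖ ⊗[R] Rq) Q] (f : P →+ Q)
    (hf : ∀ (b : Aᵐᵒᵖ) (y : Rq) (z : P), f ((b ⊗ₜ[R] y) • z) = (b ⊗ₜ[R] y) • f z) :
    P →ₗ[Aᵐᵒᵖ ⊗[R] Rq] Q where
  toFun := f
  map_add' := f.map_add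
  map_smul' c z := by
    simp only [RingHom.id_apply]
    induction c using TensorProduct.induction_on with
    | zero => exact (congrArg f (zero_smul (Aᵐᵒᵖ ⊗[R] Rq) z)).trans (f.map_zero.trans (zero_smul (Aᵐᵒᵖ ⊗[R] Rq) (f z)).symm)
    | tmul b y => exact hf b y z
    | add c c' h h' => rw [add_smul, add_smul, f.map_add, h, h']

/-- `lTensor` of an `Aᵐᵒᵖ`-linear map, as a `Aᵐᵒᵖ ⊗[R] Rq`-linear map. -/
noncomputable def baseChangeBq (g : X →ₗ[Aᵐᵒᵖ] Y) :
    (Rq ⊗[R] X) →ₗ[Aᵐᵒᵖ ⊗[R] Rq] (Rq ⊗[R] Y) :=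
  LinearMap.ofBq Rq (LinearMap.lTensor Rq (g.restrictScalars R)).toAddMonoidHom (by
    intro b y z
    rw [bq_smul_def, bq_smul_def]
    have hy : ∀ w : Rq ⊗[R] X, LinearMap.lTensor Rq (g.restrictScalars R) (y • w)
        = y • LinearMap.lTensor Rq (g.restrictScalars R) w := by
      intro w
      induction w with
      | zero => simp
      | tmul x m =>
          rw [TensorProduct.smul_tmul', LinearMap.lTensor_tmul, LinearMap.lTensor_tmul,
            TensorProduct.smul_tmul']
      | add w w' h h' => simp only [smul_add, map_add, h, h']
    have hb : ∀ w : Rq ⊗[R] Y, LinearMap.lTensor Rq (g.restrictScalars R) (b • (y • z))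
        = b • LinearMap.lTensor Rq (g.restrictScalars R) (y • z) := by
      intro _
      rw [op_smul_def, op_smul_def, ← LinearMap.comp_apply, ← LinearMap.comp_apply,
        ← LinearMap.lTensor_comp, ← LinearMap.lTensor_comp]
      congr 2
      ext m
      simp only [LinearMap.comp_apply, LinearMap.restrictScalars_apply, opSmulEnd,
        LinearMap.coe_mk, AddHom.coe_mk]
      exact g.map_smul b m
    simp only [LinearMap.toAddMonoidHom_coe]
    rw [hb 0, hy z])

lemma baseChangeBq_tmul (g : X →ₗ[Aᵐᵒᵖ] Y) (x : Rq) (m : X) :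
    baseChangeBq Rq g (x ⊗ₜ[R] m) = x ⊗ₜ[R] g m := rfl

lemma baseChangeBq_coe (g : X →ₗ[Aᵐᵒᵖ] Y) (z : Rq ⊗[R] X) :
    baseChangeBq Rq g z = LinearMap.lTensor Rq (g.restrictScalars R) z := rfl

/-- The `Aᵐᵒᵖ`-linear map `(Fin k → Aᵐᵒᵖ) → X` sending `x` to `∑ i, x i • v i`. -/
def picomb {k : ℕ} (v : Fin k → X) : (Fin k → Aᵐᵒᵖ) →ₗ[Aᵐᵒᵖ] X where
  toFun x := ∑ i, x i • v i
  map_add' x x' := by simp [add_smul, Finset.sum_add_distrib]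
  map_smul' b x := by
    simp only [RingHom.id_apply, Pi.smul_apply, smul_eq_mul, mul_smul, Finset.smul_sum]

lemma picomb_apply {k : ℕ} (v : Fin k → X) (x : Fin k → Aᵐᵒᵖ) :
    picomb v x = ∑ i, x i • v i := rfl

lemma picomb_single {k : ℕ} (v : Fin k → X) (i : Fin k) :
    picomb v (Pi.single i (1 : Aᵐᵒᵖ)) = v i := by
  classical
  rw [picomb_apply]
  simp [Pi.single_apply, ite_smul]

lemma picomb_surjective {k : ℕ} {v : Fin k → X}
    (hv : Submodule.span Aᵐᵒᵖ (Set.range v) = ⊤) : Function.Surjective (picomb (A := A) v) := by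
  intro m
  have hm : m ∈ Submodule.span Aᵐᵒᵖ (Set.range v) := hv ▸ Submodule.mem_top
  obtain ⟨c, hc⟩ := (Submodule.mem_span_range_iff_exists_fun Aᵐᵒᵖ).mp hm
  exact ⟨c, hc⟩

/-- The underlying `R`-linear equivalence `Rq ⊗ (Fin k → Aᵐᵒᵖ) ≃ Fin k → (Aᵐᵒᵖ ⊗ Rq)`. -/
noncomputable def eAux (k : ℕ) : (Rq ⊗[R] (Fin k → Aᵐᵒᵖ)) ≃ₗ[R] (Fin k → (Aᵐᵒᵖ ⊗[R] Rq)) :=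
  (TensorProduct.piRight R R Rq (fun _ : Fin k => Aᵐᵒᵖ)).trans
    (LinearEquiv.piCongrRight (fun _ => TensorProduct.comm R Rq Aᵐᵒᵖ))

lemma eAux_tmul (k : ℕ) (x : Rq) (v : Fin k → Aᵐᵒᵖ) :
    eAux (A := A) Rq k (x ⊗ₜ[R] v) = fun i => v i ⊗ₜ[R] x := by
  funext i
  simp [eAux]

/-- The equivalence `Rq ⊗ (Fin k → Aᵐᵒᵖ) ≃ Fin k → (Aᵐᵒᵖ ⊗ Rq)` is `Aᵐᵒᵖ ⊗[R] Rq`-linear. -/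
noncomputable def piBqEquiv (k : ℕ) :
    (Rq ⊗[R] (Fin k → Aᵐᵒᵖ)) ≃ₗ[Aᵐᵒᵖ ⊗[R] Rq] (Fin k → (Aᵐᵒᵖ ⊗[R] Rq)) :=
  { LinearMap.ofBq Rq (eAux (A := A) Rq k).toLinearMap.toAddMonoidHom (by
      intro b y z
      simp only [LinearMap.toAddMonoidHom_coe, LinearEquiv.coe_coe]
      induction z with
      | zero => simp
      | tmul x v =>
          rw [bq_smul_def, TensorProduct.smul_tmul', op_smul_tmul, eAux_tmul, eAux_tmul]
          funext i
          simp [Algebra.TensorProduct.tmul_mul_tmul]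
      | add z z' hz hz' => simp only [smul_add, map_add, hz, hz']) with
    invFun := (eAux (A := A) Rq k).symm
    left_inv := (eAux (A := A) Rq k).left_inv
    right_inv := (eAux (A := A) Rq k).right_inv }

lemma projective_pi_bq (k : ℕ) :
    Module.Projective (Aᵐᵒᵖ ⊗[R] Rq) (Rq ⊗[R] (Fin k → Aᵐᵒᵖ)) :=
  Module.Projective.of_equiv (piBqEquiv (A := A) Rq k).symm

/-- Ascent: if the presentation splits up to a unit `h`, then the localized module is
projective. -/
lemma projective_of_splitting {k : ℕ} (v : Fin k → X) (t : X →ₗ[Aᵐᵒᵖ] (Fin k → Aᵐᵒᵖ))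
    (h : R) (hu : IsUnit (algebraMap R Rq h))
    (hcomp : (picomb v) ∘ₗ t = h • LinearMap.id) :
    Module.Projective (Aᵐᵒᵖ ⊗[R] Rq) (Rq ⊗[R] X) := by
  haveI : Module.Projective (Aᵐᵒᵖ ⊗[R] Rq) (Rq ⊗[R] (Fin k → Aᵐᵒᵖ)) :=
    projective_pi_bq (R := R) (A := A) Rq k
  set Pi0 := baseChangeBq (R := R) Rq (picomb (A := A) v) with hPi0
  set T := baseChangeBq (R := R) Rq t with hT
  set c : Rq := ↑hu.unit⁻¹ with hc
  let iv : (Rq ⊗[R] (Fin k → Aᵐᵒᵖ)) →ₗ[Aᵐᵒᵖ ⊗[R] Rq] (Rq ⊗[R] (Fin k → Aᵐᵒᵖ)) :=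
    LinearMap.ofBq Rq (AddMonoidHom.mk' (c • ·) (fun z z' => smul_add c z z')) (by
      intro b y z
      simp only [AddMonoidHom.mk'_apply]
      rw [bq_smul_def, bq_smul_def, smul_comm y c, smul_comm b c])
  have hPT : ∀ z, Pi0 (T z) = h • z := by
    intro z
    rw [show T z = LinearMap.lTensor Rq (t.restrictScalars R) z from rfl]
    rw [show ∀ w, Pi0 w = LinearMap.lTensor Rq ((picomb v).restrictScalars R) w
        from fun _ => rfl]
    rw [← LinearMap.comp_apply, ← LinearMap.lTensor_comp]
    have hco : ((picomb v).restrictScalars R) ∘ₗ (t.restrictScalars R)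
        = ((h • LinearMap.id : X →ₗ[Aᵐᵒᵖ] X)).restrictScalars R := by
      ext m
      simpa using LinearMap.congr_fun hcomp m
    rw [hco]
    induction z with
    | zero => simp
    | tmul x m =>
        rw [LinearMap.lTensor_tmul]
        simp only [LinearMap.restrictScalars_apply, LinearMap.smul_apply, LinearMap.id_apply]
        rw [TensorProduct.tmul_smul]
    | add z z' hz hz' => simp only [map_add, smul_add, hz, hz']
  refine Module.Projective.of_split (iv ∘ₗ T) Pi0 ?_
  ext z
  simp only [LinearMap.comp_apply, LinearMap.id_apply]
  rw [show iv (T z) = c • T z from rfl]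
  have hPc : Pi0 (c • T z) = c • Pi0 (T z) := by
    rw [← one_tmul_smul (A := A) (X := Fin k → Aᵐᵒᵖ) Rq c,
      ← one_tmul_smul (A := A) (X := X) Rq c, map_smul]
  rw [hPc, hPT z, ← algebraMap_smul Rq h z, smul_smul, hc, hu.val_inv_mul, one_smul]

lemma r_op_smul_comm (r : R) (b : Aᵐᵒᵖ) (z : Rq ⊗[R] X) : r • (b • z) = b • (r • z) := by
  rw [← algebraMap_smul Rq r (b • z), ← algebraMap_smul Rq r z]
  exact (smul_comm b (algebraMap R Rq r) z).symm

/-- Descent: if the localization at `p` is projective, the presentation splits up to an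
element of `R` not in `p`. -/
lemma exists_splitting (p : Ideal R) [p.IsPrime] {k : ℕ} {v : Fin k → X}
    (hv : Function.Surjective (picomb (A := A) v))
    (hker : (LinearMap.ker (picomb (A := A) v)).FG)
    (hproj : Module.Projective (Aᵐᵒᵖ ⊗[R] Localization.AtPrime p)
      (Localization.AtPrime p ⊗[R] X)) :
    ∃ (t : X →ₗ[Aᵐᵒᵖ] (Fin k → Aᵐᵒᵖ)) (h : R), h ∈ p.primeCompl ∧
      (picomb (A := A) v) ∘ₗ t = h • LinearMap.id := by
  classical
  set Rp := Localization.AtPrime p with hRp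
  set S := p.primeCompl with hS
  let mkX : X →ₗ[R] Rp ⊗[R] X := TensorProduct.mk R Rp X 1
  let mkF : (Fin k → Aᵐᵒᵖ) →ₗ[R] Rp ⊗[R] (Fin k → Aᵐᵒᵖ) := TensorProduct.mk R Rp _ 1
  haveI hlocX : IsLocalizedModule S mkX :=
    (isLocalizedModule_iff_isBaseChange S Rp mkX).mpr (TensorProduct.isBaseChange R X Rp)
  haveI hlocF : IsLocalizedModule S mkF :=
    (isLocalizedModule_iff_isBaseChange S Rp mkF).mpr
      (TensorProduct.isBaseChange R (Fin k → Aᵐᵒᵖ) Rp)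
  set Pi0 := baseChangeBq (R := R) Rp (picomb (A := A) v) with hPi0def
  have hPi0surj : Function.Surjective Pi0 := by
    intro z
    obtain ⟨w, hw⟩ := LinearMap.lTensor_surjective Rp
      (g := (picomb (A := A) v).restrictScalars R) hv z
    exact ⟨w, hw⟩
  obtain ⟨s, hs⟩ := Module.projective_lifting_property Pi0 LinearMap.id hPi0surj
  have hsB : ∀ (b : Aᵐᵒᵖ) (z : Rp ⊗[R] X), s (b • z) = b • s z := by
    intro b z
    rw [← op_smul_one_tmul (A := A) (X := X) Rp b,
      ← op_smul_one_tmul (A := A) (X := Fin k → Aᵐᵒᵖ) Rp b, map_smul]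
  -- numerators with a common denominator
  have hsurjn := fun i : Fin k => IsLocalizedModule.surj S mkF (s ((1 : Rp) ⊗ₜ[R] v i))
  choose dn hdn using hsurjn
  set f : R := ∏ i, ((dn i).2 : R) with hfdef
  have hfS : f ∈ S := Submonoid.prod_mem S (fun i _ => (dn i).2.2)
  set n : Fin k → (Fin k → Aᵐᵒᵖ) :=
    fun i => (∏ j ∈ Finset.univ.erase i, ((dn j).2 : R)) • (dn i).1 with hndef
  have hn : ∀ i, f • s ((1 : Rp) ⊗ₜ[R] v i) = mkF (n i) := by
    intro i
    have h1 : f = (∏ j ∈ Finset.univ.erase i, ((dn j).2 : R)) * ((dn i).2 : R) :=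
      (Finset.prod_erase_mul _ _ (Finset.mem_univ i)).symm
    rw [h1, mul_smul, ← Submonoid.smul_def, hdn i, ← map_smul]
  set t0 := picomb (A := A) (X := Fin k → Aᵐᵒᵖ) n with ht0def
  -- the key identity
  have hmkB : ∀ (b : Aᵐᵒᵖ) (w : Fin k → Aᵐᵒᵖ), mkF (b • w) = b • mkF w := by
    intro b w
    exact (op_smul_tmul (Fin k → Aᵐᵒᵖ) Rp b 1 w).symm
  have hlam : ∀ x : Fin k → Aᵐᵒᵖ,
      mkF (t0 x) = f • s ((1 : Rp) ⊗ₜ[R] (picomb (A := A) v x)) := by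
    intro x
    have h1 : (1 : Rp) ⊗ₜ[R] (picomb (A := A) v x) = ∑ i, x i • ((1 : Rp) ⊗ₜ[R] v i) := by
      rw [picomb_apply, TensorProduct.tmul_sum]
      exact Finset.sum_congr rfl fun i _ => (op_smul_tmul X Rp (x i) 1 (v i)).symm
    rw [h1, map_sum, Finset.smul_sum, ht0def, picomb_apply, map_sum]
    refine Finset.sum_congr rfl fun i _ => ?_
    rw [hmkB, ← hn i, hsB, r_op_smul_comm]
  -- relations
  obtain ⟨T, hT⟩ := hker
  have hrel : ∀ r ∈ T, ∃ c : S, c • t0 r = 0 := by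
    intro r hr
    have hrk : r ∈ LinearMap.ker (picomb (A := A) v) := hT ▸ Submodule.subset_span hr
    have h0 : mkF (t0 r) = mkF 0 := by
      rw [map_zero, hlam, LinearMap.mem_ker.mp hrk, TensorProduct.tmul_zero, map_zero,
        smul_zero]
    obtain ⟨c, hc⟩ := IsLocalizedModule.exists_of_eq (S := S) (f := mkF) h0
    exact ⟨c, by simpa using hc⟩
  choose! cr hcr using hrel
  set f' : R := ∏ r ∈ T, (cr r : R) with hf'def
  have hf'S : f' ∈ S := Submonoid.prod_mem S (fun r _ => (cr r).2)
  have hf't0 : ∀ r ∈ T, f' • t0 r = 0 := by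
    intro r hr
    have h1 : f' = (∏ j ∈ T.erase r, (cr j : R)) * (cr r : R) :=
      (Finset.prod_erase_mul _ _ hr).symm
    rw [h1, mul_smul, ← Submonoid.smul_def, hcr r hr, smul_zero]
  have hle : LinearMap.ker (picomb (A := A) v) ≤ LinearMap.ker (f' • t0) := by
    rw [← hT, Submodule.span_le]
    intro r hr
    simp only [SetLike.mem_coe, LinearMap.mem_ker, LinearMap.smul_apply]
    exact hf't0 r hr
  set e := LinearMap.quotKerEquivOfSurjective (picomb (A := A) v) hv with hedef
  set t : X →ₗ[Aᵐᵒᵖ] (Fin k → Aᵐᵒᵖ) :=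
    ((LinearMap.ker (picomb (A := A) v)).liftQ (f' • t0) hle) ∘ₗ e.symm.toLinearMap with htdef
  have ht : ∀ x, t (picomb (A := A) v x) = f' • t0 x := by
    intro x
    have he : e (Submodule.Quotient.mk x) = picomb (A := A) v x := rfl
    have he2 : e.symm (picomb (A := A) v x) = Submodule.Quotient.mk x := by
      rw [LinearEquiv.symm_apply_eq, he]
    rw [htdef]
    simp only [LinearMap.comp_apply, LinearEquiv.coe_toLinearMap]
    rw [he2, Submodule.liftQ_apply, LinearMap.smul_apply]
  -- generator equation
  have hgen : ∀ i, mkX ((picomb (A := A) v) (n i)) = mkX (f • v i) := by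
    intro i
    have h1 : Pi0 (mkF (n i)) = mkX (picomb (A := A) v (n i)) := rfl
    have h2 : Pi0 (f • s ((1 : Rp) ⊗ₜ[R] v i)) = f • ((1 : Rp) ⊗ₜ[R] v i) := by
      rw [← algebraMap_smul Rp f (s _),
        ← one_tmul_smul (A := A) (X := Fin k → Aᵐᵒᵖ) Rp (algebraMap R Rp f), map_smul,
        one_tmul_smul, algebraMap_smul]
      have h3 := LinearMap.congr_fun hs ((1 : Rp) ⊗ₜ[R] v i)
      simp only [LinearMap.comp_apply, LinearMap.id_apply] at h3
      rw [h3]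
    have h4 : mkX (f • v i) = f • ((1 : Rp) ⊗ₜ[R] v i) := map_smul mkX f (v i)
    rw [← h1, ← hn i, h2, h4]
  have hgenc : ∀ i, ∃ c : S, c • (picomb (A := A) v) (n i) = c • (f • v i) :=
    fun i => IsLocalizedModule.exists_of_eq (S := S) (f := mkX) (hgen i)
  choose g hg using hgenc
  set gg : R := ∏ i, (g i : R) with hggdef
  have hggS : gg ∈ S := Submonoid.prod_mem S (fun i _ => (g i).2)
  have hgg : ∀ i, gg • (picomb (A := A) v) (n i) = gg • f • v i := by
    intro i
    have h1 : gg = (∏ j ∈ Finset.univ.erase i, ((g j) : R)) * ((g i) : R) :=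
      (Finset.prod_erase_mul _ _ (Finset.mem_univ i)).symm
    rw [h1, mul_smul, ← Submonoid.smul_def, hg i, Submonoid.smul_def, mul_smul]
  have key : ∀ i, (gg * f') • (picomb (A := A) v (n i)) = (f' * (gg * f)) • v i := by
    intro i
    rw [mul_comm gg f', mul_smul, hgg i, smul_smul, smul_smul, mul_assoc]
  refine ⟨gg • t, f' * (gg * f), mul_mem hf'S (mul_mem hggS hfS), ?_⟩
  ext m
  obtain ⟨x, rfl⟩ := hv m
  simp only [LinearMap.comp_apply, LinearMap.smul_apply, LinearMap.id_apply]
  rw [ht x, LinearMap.map_smul_of_tower, LinearMap.map_smul_of_tower, smul_smul]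
  have hx1 : picomb (A := A) v (t0 x) = ∑ i, x i • (picomb (A := A) v (n i)) := by
    rw [ht0def, picomb_apply (v := n), map_sum]
    exact Finset.sum_congr rfl fun i _ => map_smul _ _ _
  rw [hx1, Finset.smul_sum]
  conv_rhs => rw [picomb_apply, Finset.smul_sum]
  refine Finset.sum_congr rfl fun i _ => ?_
  rw [← smul_comm (x i) (gg * f'), key i, smul_comm (x i) (f' * (gg * f))]

end Aux

/-- A (possibly noncommutative) ring `A` is *local* in the sense of the paper if the quotient
`A/J(A)` of `A` by its Jacobson radical is a simple Artinian ring. -/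
def IsLocalRingNC (A : Type u) [Ring A] : Prop :=
  ∃ (Q : Type u) (_ : Ring Q) (f : A →+* Q), Function.Surjective f ∧
    (∀ a : A, f a = 0 ↔ a ∈ (⊥ : Ideal A).jacobson) ∧ IsSimpleRing Q ∧ IsArtinianRing Q

/-- Let `R` be a commutative ring and `A` an `R`-algebra which is finitely presented as an
`R`-module, such that the central localization `A_p` is a local ring for every prime `p` of `R`.
If `M` is a finitely presented right `A`-module, then the set of primes `p` of `R` such that
`M_p` is a projective (right) `A_p`-module is open in `Spec R`. -/
theorem stmt13 {R : Type u} {A : Type u} [CommRing R] [Ring A] [Algebra R A]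
    [Module.FinitePresentation R A]
    (hloc : ∀ (p : Ideal R) [p.IsPrime],
      IsLocalRingNC (A ⊗[R] Localization.AtPrime p))
    (M : Type u) [AddCommGroup M] [Module R M] [Module Aᵐᵒᵖ M]
    [SMulCommClass Aᵐᵒᵖ R M] [IsScalarTower R Aᵐᵒᵖ M]
    [Module.FinitePresentation Aᵐᵒᵖ M] :
    IsOpen { p : PrimeSpectrum R |
      Module.Projective (Aᵐᵒᵖ ⊗[R] Localization.AtPrime p.asIdeal)
        (Localization.AtPrime p.asIdeal ⊗[R] M) } := by
  classical
  obtain ⟨k, v, hvspan⟩ := Module.Finite.exists_fin (R := Aᵐᵒᵖ) (M := M)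
  have hv : Function.Surjective (picomb (A := A) v) := picomb_surjective hvspan
  have hker : (LinearMap.ker (picomb (A := A) v)).FG :=
    Module.FinitePresentation.fg_ker (picomb (A := A) v) hv
  rw [isOpen_iff_forall_mem_open]
  intro p hp
  obtain ⟨t, h, hhS, hcomp⟩ := exists_splitting p.asIdeal hv hker hp
  refine ⟨(PrimeSpectrum.basicOpen h : TopologicalSpace.Opens (PrimeSpectrum R)), ?_,
    (PrimeSpectrum.basicOpen h).2, ?_⟩
  · intro q hq
    have hq' : h ∉ q.asIdeal := PrimeSpectrum.mem_basicOpen _ _ |>.mp hq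
    have hu : IsUnit (algebraMap R (Localization.AtPrime q.asIdeal) h) :=
      IsLocalization.map_units (M := q.asIdeal.primeCompl) _ ⟨h, hq'⟩
    exact projective_of_splitting _ v t h hu hcomp
  · exact (PrimeSpectrum.mem_basicOpen _ _).mpr hhS
end

section
/- Let R be a commutative ring and M a finitely presented R-module whose support Supp(M) is an open (hence clopen) subset of Spec R. Then there exists an idempotent e ∈ R with Supp(M) = D(e) (the basic open set of primes not containing e), and M·(1−e) = 0. -/
/-- Let `R` be a commutative ring and `M` a finitely presented `R`-module whose support is an
open subset of `Spec R`. Then there is an idempotent `e ∈ R` with `Supp(M) = D(e)` and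
`M·(1−e) = 0`. -/
theorem stmt14 {R : Type u} {M : Type v} [CommRing R] [AddCommGroup M] [Module R M]
    [Module.FinitePresentation R M]
    (hopen : IsOpen (Module.support R M)) :
    ∃ e : R, IsIdempotentElem e ∧
      Module.support R M = ↑(PrimeSpectrum.basicOpen e) ∧
      ∀ m : M, (1 - e) • m = 0 := by
  have hclopen : IsClopen (Module.support R M) := ⟨Module.isClosed_support, hopen⟩
  obtain ⟨e, he, hbo⟩ :=
    PrimeSpectrum.exists_idempotent_basicOpen_eq_of_isClopen hclopen
  refine ⟨e, he, hbo, fun m => ?_⟩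
  have hrad : 1 - e ∈ (Module.annihilator R M).radical := by
    rw [← PrimeSpectrum.vanishingIdeal_zeroLocus_eq_radical,
      PrimeSpectrum.mem_vanishingIdeal]
    intro p hp
    have hmem : p ∈ Module.support R M := by
      rw [Module.support_eq_zeroLocus]; exact hp
    rw [hbo] at hmem
    have hne : e ∉ p.asIdeal := hmem
    have : e * (1 - e) ∈ p.asIdeal := by
      rw [mul_sub, mul_one, he]; simp
    rcases p.isPrime.mem_or_mem this with h | h
    · exact absurd h hne
    · exact h
  have h1e : 1 - e ∈ Module.annihilator R M := by
    obtain ⟨n, hn⟩ := hrad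
    rcases n with _ | n
    · simp at hn
      simpa using Ideal.mul_mem_left _ (1 - e) hn
    · rwa [he.one_sub.pow_succ_eq n] at hn
  exact (Module.mem_annihilator.mp h1e) m
end

section
/- Let R be a commutative ring and n : Spec R → ℤ a continuous function (ℤ discrete). Then there exist finitely many integers n_1 > ⋯ > n_s and a complete set of orthogonal idempotents e_1, …, e_s in R (i.e., e_i e_j = 0 for i ≠ j and e_1 + ⋯ + e_s = 1) such that n^{-1}(n_i) = D(e_i) for each i and n^{-1}(m) = ∅ for m ∉ {n_1, …, n_s}. -/
/-- Let `R` be a commutative ring and `n : Spec R → ℤ` a continuous function (`ℤ` discrete).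
Then there are finitely many integers `n₁ > ⋯ > nₛ` and a complete set of orthogonal
idempotents `e₁, …, eₛ` of `R` such that `n⁻¹(nᵢ) = D(eᵢ)` for each `i`, and `n⁻¹(m) = ∅`
for `m ∉ {n₁, …, nₛ}`. -/
theorem stmt16 {R : Type u} [CommRing R] (n : PrimeSpectrum R → ℤ) (hn : Continuous n) :
    ∃ (s : ℕ) (k : Fin s → ℤ) (e : Fin s → R), StrictAnti k ∧
      (∀ i, IsIdempotentElem (e i)) ∧
      (∀ i j, i ≠ j → e i * e j = 0) ∧
      (∑ i, e i) = 1 ∧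
      (∀ i, n ⁻¹' {k i} = ↑(PrimeSpectrum.basicOpen (e i))) ∧
      (∀ m : ℤ, m ∉ Set.range k → n ⁻¹' {m} = ∅) := by
  have hfin : (Set.range n).Finite := by
    have hc : IsCompact (Set.range n) := isCompact_range hn
    exact hc.finite ⟨by infer_instance⟩
  set T : Finset ℤ := hfin.toFinset with hT
  refine ⟨T.card, fun i => (T.orderIsoOfFin rfl i.rev : ℤ), ?_⟩
  have hanti : StrictAnti (fun i : Fin T.card => (T.orderIsoOfFin rfl i.rev : ℤ)) := by
    intro i j hij
    exact_mod_cast (T.orderIsoOfFin rfl).strictMono (by simpa using hij)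
  -- each fiber is clopen
  have hclopen : ∀ m : ℤ, IsClopen (n ⁻¹' {m}) := fun m =>
    (isClopen_discrete {m}).preimage hn
  have he : ∀ i : Fin T.card, ∃ e : R, IsIdempotentElem e ∧
      n ⁻¹' {(T.orderIsoOfFin rfl i.rev : ℤ)} = ↑(PrimeSpectrum.basicOpen e) :=
    fun i => PrimeSpectrum.exists_idempotent_basicOpen_eq_of_isClopen (hclopen _)
  choose e hidem hbo using he
  have hne : ∀ i j : Fin T.card, i ≠ j → e i * e j = 0 := by
    intro i j hij
    have hkne : (T.orderIsoOfFin rfl i.rev : ℤ) ≠ (T.orderIsoOfFin rfl j.rev : ℤ) := by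
      intro h
      exact hij (Fin.rev_injective ((T.orderIsoOfFin rfl).injective (Subtype.ext h)))
    have hdisj : (PrimeSpectrum.basicOpen (e i * e j) : Set (PrimeSpectrum R)) = ∅ := by
      rw [PrimeSpectrum.basicOpen_mul]
      have : (↑(PrimeSpectrum.basicOpen (e i)) ∩ ↑(PrimeSpectrum.basicOpen (e j)) :
          Set (PrimeSpectrum R)) = ∅ := by
        rw [← hbo i, ← hbo j]
        ext p
        simp only [Set.mem_inter_iff, Set.mem_preimage, Set.mem_singleton_iff,
          Set.mem_empty_iff_false, iff_false, not_and]
        intro h1 h2; exact hkne (h1 ▸ h2 ▸ rfl)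
      simpa using this
    have hnil : IsNilpotent (e i * e j) := by
      rw [← PrimeSpectrum.basicOpen_eq_bot_iff]
      exact SetLike.ext' hdisj
    exact ((hidem i).mul_of_commute (Commute.all _ _) (hidem j)).eq_zero_of_isNilpotent hnil
  refine ⟨e, hanti, hidem, hne, ?_, fun i => hbo i, ?_⟩
  · -- sum = 1
    set f : R := ∑ i, e i with hf
    have hfidem : IsIdempotentElem f := by
      show f * f = f
      calc f * f = ∑ i, ∑ j, e i * e j := by rw [hf, Finset.sum_mul_sum]
        _ = ∑ i, e i := Finset.sum_congr rfl fun i _ => by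
            rw [Finset.sum_eq_single i (fun j _ hj => hne i j (Ne.symm hj))
              (fun h => absurd (Finset.mem_univ i) h), hidem i]
    have hmem : ∀ p : PrimeSpectrum R, (1 - f) ∈ p.asIdeal := by
      intro p
      have hnp : n p ∈ Set.range n := ⟨p, rfl⟩
      have hnT : n p ∈ T := by simp [hT]
      obtain ⟨i, hi⟩ := (T.orderIsoOfFin rfl).surjective ⟨n p, hnT⟩
      have hpi : p ∈ (PrimeSpectrum.basicOpen (e i.rev) : Set (PrimeSpectrum R)) := by
        rw [← hbo i.rev]
        simp [Fin.rev_rev, hi]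
      have hmul : (1 - f) * e i.rev = 0 := by
        rw [sub_mul, one_mul, hf, Finset.sum_mul, Finset.sum_eq_single i.rev]
        · rw [hidem i.rev, sub_self]
        · intro j _ hj; exact hne j i.rev hj
        · intro h; exact absurd (Finset.mem_univ _) h
      have : (1 - f) * e i.rev ∈ p.asIdeal := hmul ▸ p.asIdeal.zero_mem
      rcases p.isPrime.mem_or_mem this with h | h
      · exact h
      · exact absurd h hpi
    have hnil : IsNilpotent (1 - f) := by
      rw [nilpotent_iff_mem_prime]
      intro J hJ
      exact hmem ⟨J, hJ⟩
    have := (hfidem.one_sub).eq_zero_of_isNilpotent hnil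
    linear_combination -this
  · intro m hm
    ext p
    simp only [Set.mem_preimage, Set.mem_singleton_iff, Set.mem_empty_iff_false, iff_false]
    intro h
    apply hm
    have hnT : n p ∈ T := by simp [hT]
    obtain ⟨i, hi⟩ := (T.orderIsoOfFin rfl).surjective ⟨n p, hnT⟩
    exact ⟨i.rev, by simp [Fin.rev_rev, hi, h]⟩
end

section
/- Let A be a ring whose center contains a subring R such that A is module-finite over R, and suppose P ↦ P ∩ R gives a homeomorphism Spec A → Spec R. Then for every prime ideal p of R, the localization A_p is a local ring (A_p modulo its Jacobson radical is simple Artinian). -/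
section Core

variable {S : Type w} {B : Type u} [CommRing S] [Ring B] [Algebra S B]

open IsLocalRing

/-- The annihilator of `B ⧸ L` as a two-sided ideal of `B`. -/
def annTS (L : Ideal B) : TwoSidedIdeal B :=
  TwoSidedIdeal.mk' {a : B | ∀ x : B, a * x ∈ L}
    (fun x => by simp)
    (fun {a b} ha hb x => by
      simpa [add_mul] using L.add_mem (ha x) (hb x))
    (fun {a} ha x => by simpa [neg_mul] using L.neg_mem (ha x))
    (fun {a b} hb x => by rw [mul_assoc]; exact Ideal.mul_mem_left _ _ (hb x))
    (fun {a b} ha x => by rw [mul_assoc]; exact ha (b * x))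

lemma mem_annTS {L : Ideal B} {a : B} : a ∈ annTS L ↔ ∀ x : B, a * x ∈ L :=
  TwoSidedIdeal.mem_mk' _ _ _ _ _ _ a

theorem lemA [IsLocalRing S] [Module.Finite S B] {L : Ideal B} (hL : L.IsMaximal)
    {s : S} (hs : s ∈ maximalIdeal S) (x : B) : algebraMap S B s * x ∈ L := by
  haveI : Module.Finite S (B ⧸ L) :=
    Module.Finite.of_surjective (LinearMap.restrictScalars S L.mkQ)
      (Submodule.Quotient.mk_surjective L)
  haveI : Nontrivial (B ⧸ L) := Submodule.Quotient.nontrivial_iff.2 hL.ne_top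
  have hcomm : ∀ (b : B) (t : S) (y : B ⧸ L), b • (t • y) = t • (b • y) := by
    intro b t y
    obtain ⟨z, rfl⟩ := Submodule.Quotient.mk_surjective L y
    rw [← Submodule.Quotient.mk_smul, ← Submodule.Quotient.mk_smul,
      ← Submodule.Quotient.mk_smul, ← Submodule.Quotient.mk_smul]
    congr 1
    show b • (t • z) = t • (b • z)
    rw [smul_eq_mul, smul_eq_mul, Algebra.smul_def, Algebra.smul_def, ← mul_assoc,
      ← Algebra.commutes t b, mul_assoc]
  set N : Submodule S (B ⧸ L) := maximalIdeal S • ⊤ with hN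
  let N' : Submodule B (B ⧸ L) :=
    { carrier := (N : Set (B ⧸ L))
      add_mem' := fun h1 h2 => N.add_mem h1 h2
      zero_mem' := N.zero_mem
      smul_mem' := by
        intro b y hy
        refine Submodule.smul_induction_on hy (fun t ht z _ => ?_) (fun y1 y2 h1 h2 => ?_)
        · show b • (t • z) ∈ N
          rw [hcomm]
          exact Submodule.smul_mem_smul ht trivial
        · show b • (y1 + y2) ∈ N
          rw [smul_add]
          exact N.add_mem h1 h2 }
  haveI : IsSimpleModule B (B ⧸ L) := isSimpleModule_iff_isCoatom.2 hL.out
  rcases eq_bot_or_eq_top N' with hbot | htop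
  · have hmem : s • (Submodule.Quotient.mk x : B ⧸ L) ∈ N' :=
      (Submodule.smul_mem_smul hs trivial : _ ∈ N)
    rw [hbot] at hmem
    have h0 : s • (Submodule.Quotient.mk x : B ⧸ L) = 0 := hmem
    rw [← Submodule.Quotient.mk_smul, Submodule.Quotient.mk_eq_zero] at h0
    rwa [← Algebra.smul_def]
  · exfalso
    have hfg : (⊤ : Submodule S (B ⧸ L)).FG := Module.Finite.fg_top
    have hle : (⊤ : Submodule S (B ⧸ L)) ≤ maximalIdeal S • ⊤ := by
      intro y _
      have : y ∈ N' := htop ▸ trivial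
      exact this
    have := Submodule.eq_bot_of_le_smul_of_le_jacobson_bot (maximalIdeal S) ⊤ hfg hle
      (IsLocalRing.jacobson_eq_maximalIdeal ⊥ bot_ne_top).ge
    exact top_ne_bot this

theorem lemB {L : Ideal B} (hL : L.IsMaximal) {j : B} (hj : j ∈ (⊥ : Ideal B).jacobson)
    (x : B) : j * x ∈ L := by
  by_contra hjx
  have hsup : L ⊔ Ideal.span {j * x} = ⊤ :=
    hL.out.2 _ (left_lt_sup.2 fun hle => hjx (hle (Submodule.mem_span_singleton_self _)))
  have hx : x ∈ L ⊔ Ideal.span {j * x} := hsup ▸ trivial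
  rw [Submodule.mem_sup] at hx
  obtain ⟨l, hl, w, hw, hxe⟩ := hx
  obtain ⟨b, rfl⟩ := Submodule.mem_span_singleton.1 hw
  rw [smul_eq_mul] at hxe
  have hc : (1 - b * j) * x ∈ L := by
    have e1 : (1 - b * j) * x = x - b * (j * x) := by rw [sub_mul, one_mul, mul_assoc]
    have e2 : x - b * (j * x) = l := (eq_sub_of_add_eq hxe).symm
    rw [e1, e2]
    exact hl
  have hbj : b * j ∈ (⊥ : Ideal B).jacobson := Ideal.mul_mem_left _ b hj
  have hspan : Ideal.span {(1 : B) - b * j} = ⊤ := by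
    by_contra hne
    obtain ⟨L', hL', hle⟩ := Ideal.exists_le_maximal _ hne
    have h1 : (1 : B) - b * j ∈ L' := hle (Ideal.subset_span rfl)
    have h2 : b * j ∈ L' := by
      have hJ : (⊥ : Ideal B).jacobson ≤ L' := sInf_le ⟨bot_le, hL'⟩
      exact hJ hbj
    exact hL'.ne_top (Ideal.eq_top_iff_one _ |>.2 (by simpa using L'.add_mem h1 h2))
  have h1span : (1 : B) ∈ Ideal.span {(1 : B) - b * j} := hspan ▸ trivial
  obtain ⟨u, hu⟩ := Submodule.mem_span_singleton.1 h1span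
  have hxL : x ∈ L := by
    have h := Ideal.mul_mem_left _ u hc
    rwa [← mul_assoc, show u * (1 - b * j) = 1 from hu, one_mul] at h
  exact hjx (Ideal.mul_mem_left _ _ hxL)

theorem annTS_isPrime {L : Ideal B} (hL : L.IsMaximal) : (annTS L).IsPrimeTS := by
  constructor
  · intro h
    have h1 : (1 : B) ∈ annTS L := h ▸ trivial
    exact hL.ne_top (Ideal.eq_top_iff_one _ |>.2 (by simpa using mem_annTS.1 h1 1))
  · intro a b h
    by_cases hb : b ∈ annTS L
    · exact Or.inr hb
    refine Or.inl (mem_annTS.2 fun x => ?_)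
    obtain ⟨x₀, hx₀⟩ : ∃ x₀ : B, b * x₀ ∉ L := by
      simpa [mem_annTS, not_forall] using hb
    have hsup : L ⊔ Ideal.span {b * x₀} = ⊤ :=
      hL.out.2 _ (left_lt_sup.2 fun hle => hx₀ (hle (Submodule.mem_span_singleton_self _)))
    have hx : x ∈ L ⊔ Ideal.span {b * x₀} := hsup ▸ trivial
    rw [Submodule.mem_sup] at hx
    obtain ⟨l, hl, w, hw, hxe⟩ := hx
    obtain ⟨c, rfl⟩ := Submodule.mem_span_singleton.1 hw
    have h2 : a * (c • (b * x₀)) ∈ L := by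
      have := mem_annTS.1 (h c) x₀
      show a * (c • (b * x₀)) ∈ L
      rw [smul_eq_mul]
      rw [show a * (c * (b * x₀)) = a * c * b * x₀ by rw [← mul_assoc, ← mul_assoc]]
      exact this
    have := L.add_mem (Ideal.mul_mem_left _ a hl) h2
    rwa [← mul_add, hxe] at this

theorem core_isLocalRingNC [IsLocalRing S] [Module.Finite S B] [Nontrivial B]
    (huniq : ∀ P₁ P₂ : TwoSidedIdeal B, P₁.IsPrimeTS → P₂.IsPrimeTS →
      (∀ s ∈ maximalIdeal S, algebraMap S B s ∈ P₁) →
      (∀ s ∈ maximalIdeal S, algebraMap S B s ∈ P₂) → P₁ = P₂) :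
    IsLocalRingNC B := by
  obtain ⟨L₀, hL₀⟩ := Ideal.exists_maximal B
  set M₀ := annTS L₀ with hM₀def
  have hmm : ∀ (L : Ideal B), L.IsMaximal → ∀ s ∈ maximalIdeal S, algebraMap S B s ∈ annTS L :=
    fun L hL s hs => mem_annTS.2 fun x => lemA hL hs x
  have hann : ∀ (L : Ideal B), L.IsMaximal → annTS L = M₀ :=
    fun L hL => huniq _ _ (annTS_isPrime hL) (annTS_isPrime hL₀) (hmm L hL) (hmm L₀ hL₀)
  have hJ : ∀ a : B, a ∈ M₀ ↔ a ∈ (⊥ : Ideal B).jacobson := by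
    intro a
    constructor
    · intro ha
      rw [Ideal.jacobson]
      rw [Submodule.mem_sInf]
      rintro J ⟨-, hJm⟩
      have := mem_annTS.1 (show a ∈ annTS J from (hann J hJm).symm ▸ ha) 1
      simpa using this
    · intro ha
      exact mem_annTS.2 fun x => lemB hL₀ ha x
  have hM₀netop : M₀ ≠ ⊤ := (annTS_isPrime hL₀).1
  have hone : (1 : B) ∉ M₀ := fun h => hM₀netop (M₀.one_mem_iff.1 h)
  have hmax : ∀ I : TwoSidedIdeal B, I ≠ ⊤ → I ≤ M₀ := by
    intro I hI
    have h1 : I.asIdeal ≠ ⊤ := by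
      intro h
      exact hI (I.one_mem_iff.1 (TwoSidedIdeal.mem_asIdeal.1 (h ▸ trivial)))
    obtain ⟨L, hLmax, hle⟩ := Ideal.exists_le_maximal _ h1
    intro x hx
    rw [← hann L hLmax]
    exact mem_annTS.2 fun z => hle (TwoSidedIdeal.mem_asIdeal.2 (I.mul_mem_right _ _ hx))
  -- the quotient ring
  let Q := M₀.ringCon.Quotient
  let f : B →+* Q := M₀.ringCon.mk'
  have hsurj : Function.Surjective f := fun q => Quot.inductionOn q fun b => ⟨b, rfl⟩
  have hker : ∀ a : B, f a = 0 ↔ a ∈ M₀ := by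
    intro a
    have h0 : (0 : Q) = ((0 : B) : Q) := rfl
    show (a : Q) = (0 : Q) ↔ _
    rw [h0, RingCon.eq]
    exact (TwoSidedIdeal.mem_iff M₀ a).symm
  haveI hQnt : Nontrivial Q :=
    ⟨⟨f 1, 0, fun h => hone ((hker 1).1 h)⟩⟩
  have hsimple : IsSimpleRing Q := by
    refine ⟨⟨fun I => ?_⟩⟩
    by_cases h1 : I = ⊤
    · exact Or.inr h1
    refine Or.inl ?_
    have hcomap : TwoSidedIdeal.comap f I ≠ ⊤ := by
      intro h
      have hmem : (1 : B) ∈ TwoSidedIdeal.comap f I := h ▸ trivial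
      rw [TwoSidedIdeal.mem_comap f] at hmem
      exact h1 (I.one_mem_iff.1 (by simpa using hmem))
    have hle := hmax _ hcomap
    refine SetLike.ext fun x => ?_
    rw [TwoSidedIdeal.mem_bot]
    constructor
    · intro hx
      obtain ⟨b, rfl⟩ := hsurj x
      have hb : b ∈ TwoSidedIdeal.comap f I := (TwoSidedIdeal.mem_comap f).2 hx
      exact (hker b).2 (hle hb)
    · rintro rfl
      exact I.zero_mem
  -- algebra structures
  letI algSQ : Algebra S Q := (f.comp (algebraMap S B)).toAlgebra' (by
    intro s x
    obtain ⟨b, rfl⟩ := hsurj x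
    show f (algebraMap S B s) * f b = f b * f (algebraMap S B s)
    rw [← map_mul, ← map_mul, Algebra.commutes])
  have halgSQ : ∀ s : S, algebraMap S Q s = f (algebraMap S B s) := fun s => rfl
  haveI : Module.Finite S Q := by
    refine Module.Finite.of_surjective
      ({ toFun := f
         map_add' := fun x y => map_add f x y
         map_smul' := fun s b => by
           simp only [RingHom.id_apply]
           rw [Algebra.smul_def, Algebra.smul_def, map_mul]
           rfl } : B →ₗ[S] Q) hsurj
  haveI : (maximalIdeal S).IsMaximal := IsLocalRing.maximalIdeal.isMaximal S
  haveI : IsArtinianRing (S ⧸ maximalIdeal S) := by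
    letI := Ideal.Quotient.field (maximalIdeal S)
    exact DivisionRing.instIsArtinianRing
  have hm0 : ∀ s ∈ maximalIdeal S, algebraMap S Q s = 0 := by
    intro s hs
    rw [halgSQ, hker]
    exact hmm L₀ hL₀ s hs
  letI algKQ : Algebra (S ⧸ maximalIdeal S) Q :=
    (Ideal.Quotient.lift (maximalIdeal S) (algebraMap S Q) hm0).toAlgebra' (by
      intro c x
      obtain ⟨s, rfl⟩ := Ideal.Quotient.mk_surjective c
      rw [Ideal.Quotient.lift_mk]
      exact Algebra.commutes s x)
  haveI := IsScalarTower.of_algebraMap_eq (R := S) (S := S ⧸ maximalIdeal S) (A := Q)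
    (fun s => (Ideal.Quotient.lift_mk (maximalIdeal S) (algebraMap S Q) hm0).symm)
  haveI : Module.Finite (S ⧸ maximalIdeal S) Q :=
    Module.Finite.of_restrictScalars_finite S _ _
  haveI hart : IsArtinianRing Q := IsArtinianRing.of_finite (S ⧸ maximalIdeal S) Q
  exact ⟨Q, inferInstance, f, hsurj, fun a => (hker a).trans (hJ a), hsimple, hart⟩

end Core

section TensorPart

open TensorProduct

attribute [local instance] Algebra.TensorProduct.rightAlgebra

variable {R : Type v} {A : Type v} [CommRing R] [Ring A] [Algebra R A]
variable (p : Ideal R) [p.IsPrime] (S : Type v) [CommRing S] [Algebra R S]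
variable [IsLocalization.AtPrime S p]

lemma clear_denom (x : A ⊗[R] S) :
    ∃ (s : R) (a : A), s ∈ p.primeCompl ∧
      algebraMap S (A ⊗[R] S) (algebraMap R S s) * x =
        Algebra.TensorProduct.includeLeftRingHom a := by
  have k : ∀ (s' : R) (a' : A),
      algebraMap S (A ⊗[R] S) (algebraMap R S s') *
        Algebra.TensorProduct.includeLeftRingHom a' =
      Algebra.TensorProduct.includeLeftRingHom (s' • a') := by
    intro s' a'
    show ((1 : A) ⊗ₜ[R] algebraMap R S s') * (a' ⊗ₜ[R] (1 : S)) = (s' • a') ⊗ₜ[R] (1 : S)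
    rw [Algebra.TensorProduct.tmul_mul_tmul, one_mul, mul_one,
      Algebra.algebraMap_eq_smul_one, ← TensorProduct.smul_tmul]
  induction x using TensorProduct.induction_on with
  | zero => exact ⟨1, 0, p.primeCompl.one_mem, by simp⟩
  | tmul a u =>
    obtain ⟨⟨r, s⟩, hrs⟩ := IsLocalization.surj (M := p.primeCompl) (S := S) u
    refine ⟨s, r • a, s.2, ?_⟩
    show ((1 : A) ⊗ₜ[R] algebraMap R S (s : R)) * (a ⊗ₜ[R] u) = (r • a) ⊗ₜ[R] (1 : S)
    rw [Algebra.TensorProduct.tmul_mul_tmul, one_mul, mul_comm, hrs,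
      Algebra.algebraMap_eq_smul_one, ← TensorProduct.smul_tmul]
  | add x y hx hy =>
    obtain ⟨s1, a1, hs1, h1⟩ := hx
    obtain ⟨s2, a2, hs2, h2⟩ := hy
    refine ⟨s1 * s2, s2 • a1 + s1 • a2, p.primeCompl.mul_mem hs1 hs2, ?_⟩
    have hcomm12 : algebraMap S (A ⊗[R] S) (algebraMap R S s1) *
        algebraMap S (A ⊗[R] S) (algebraMap R S s2) =
        algebraMap S (A ⊗[R] S) (algebraMap R S s2) *
        algebraMap S (A ⊗[R] S) (algebraMap R S s1) := by
      rw [← map_mul, mul_comm, map_mul]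
    calc algebraMap S (A ⊗[R] S) (algebraMap R S (s1 * s2)) * (x + y)
        = algebraMap S (A ⊗[R] S) (algebraMap R S s1) *
            algebraMap S (A ⊗[R] S) (algebraMap R S s2) * (x + y) := by
          rw [map_mul, map_mul]
      _ = algebraMap S (A ⊗[R] S) (algebraMap R S s2) *
            (algebraMap S (A ⊗[R] S) (algebraMap R S s1) * x) +
          algebraMap S (A ⊗[R] S) (algebraMap R S s1) *
            (algebraMap S (A ⊗[R] S) (algebraMap R S s2) * y) := by
          rw [mul_add]
          congr 1
          · rw [hcomm12, mul_assoc]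
          · rw [mul_assoc]
      _ = Algebra.TensorProduct.includeLeftRingHom (s2 • a1 + s1 • a2) := by
          rw [h1, h2, k, k, map_add]

end TensorPart

attribute [local instance] Algebra.TensorProduct.rightAlgebra in
set_option maxHeartbeats 1600000 in
open TensorProduct in
/-- Let `A` be a ring whose center contains a subring `R` such that `A` is module-finite over
`R`, and suppose `P ↦ P ∩ R` is a homeomorphism `Spec A → Spec R`. Then for every prime ideal
`p` of `R` the central localization `A_p = A ⊗_R R_p` is a local ring (its quotient by its
Jacobson radical is simple Artinian). -/
theorem stmt17 {R : Type v} {A : Type v} [CommRing R] [Ring A] [Algebra R A]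
    (hinj : Function.Injective (algebraMap R A))
    [Module.Finite R A]
    (hhomeo : IsHomeomorph (piSpec R (A := A))) :
    ∀ (p : Ideal R) [p.IsPrime], IsLocalRingNC (A ⊗[R] Localization.AtPrime p) := by
  intro p hp
  haveI : IsLocalization.AtPrime (Localization.AtPrime p) p := Localization.isLocalization
  haveI hnt : Nontrivial (A ⊗[R] Localization.AtPrime p) := by
    have hinj2 : Function.Injective
        ((Algebra.linearMap R A).rTensor (Localization.AtPrime p)) :=
      Module.Flat.rTensor_preserves_injective_linearMap _ hinj
    refine nontrivial_of_ne 1 0 fun h => ?_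
    have h2 : ((1 : R) ⊗ₜ[R] (1 : Localization.AtPrime p) :
        R ⊗[R] Localization.AtPrime p) = 0 := by
      apply hinj2
      rw [map_zero, LinearMap.rTensor_tmul]
      simpa [Algebra.TensorProduct.one_def] using h
    have h3 := congrArg (TensorProduct.lid R (Localization.AtPrime p)) h2
    simp only [TensorProduct.lid_tmul, one_smul, map_zero] at h3
    exact one_ne_zero h3
  haveI hMF : Module.Finite (Localization.AtPrime p) (A ⊗[R] Localization.AtPrime p) := by
    classical
    obtain ⟨t, ht⟩ := Module.Finite.fg_top (R := R) (M := A)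
    refine ⟨⟨t.image (fun a => a ⊗ₜ[R] (1 : Localization.AtPrime p)), ?_⟩⟩
    rw [eq_top_iff]
    rintro x -
    have hsub : ∀ a : A, a ⊗ₜ[R] (1 : Localization.AtPrime p) ∈
        Submodule.span (Localization.AtPrime p)
          ((t.image (fun a => a ⊗ₜ[R] (1 : Localization.AtPrime p)) :
            Finset (A ⊗[R] Localization.AtPrime p)) :
            Set (A ⊗[R] Localization.AtPrime p)) := by
      intro a
      have hmem : a ∈ Submodule.span R (t : Set A) := ht ▸ trivial
      refine Submodule.span_induction ?_ ?_ ?_ ?_ hmem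
      · intro a' ha'
        exact Submodule.subset_span (by
          simp only [Finset.coe_image, Set.mem_image, Finset.mem_coe]
          exact ⟨a', ha', rfl⟩)
      · rw [TensorProduct.zero_tmul]
        exact Submodule.zero_mem _
      · intro a1 a2 _ _ hh1 hh2
        rw [TensorProduct.add_tmul]
        exact Submodule.add_mem _ hh1 hh2
      · intro r a' _ hh
        rw [← TensorProduct.smul_tmul', ← algebraMap_smul (Localization.AtPrime p) r]
        exact Submodule.smul_mem _ _ hh
    induction x using TensorProduct.induction_on with
    | zero => exact Submodule.zero_mem _
    | tmul a s =>
      have he : a ⊗ₜ[R] s = s • (a ⊗ₜ[R] (1 : Localization.AtPrime p)) := by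
        rw [Algebra.smul_def]
        show _ = ((1 : A) ⊗ₜ[R] s) * (a ⊗ₜ[R] (1 : Localization.AtPrime p))
        rw [Algebra.TensorProduct.tmul_mul_tmul, one_mul, mul_one]
      rw [he]
      exact Submodule.smul_mem _ _ (hsub a)
    | add x y hx hy => exact Submodule.add_mem _ hx hy
  refine core_isLocalRingNC (S := Localization.AtPrime p) ?_
  intro P₁ P₂ h1 h2 hm1 hm2
  have hunit : ∀ s ∈ p.primeCompl,
      IsUnit (algebraMap (Localization.AtPrime p) (A ⊗[R] Localization.AtPrime p)
        (algebraMap R (Localization.AtPrime p) s)) := fun s hs =>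
    (IsLocalization.map_units (M := p.primeCompl) (Localization.AtPrime p) ⟨s, hs⟩).map
      (algebraMap (Localization.AtPrime p) (A ⊗[R] Localization.AtPrime p))
  have hcancel : ∀ (P : TwoSidedIdeal (A ⊗[R] Localization.AtPrime p))
      (u x : A ⊗[R] Localization.AtPrime p), IsUnit u → u * x ∈ P → x ∈ P := by
    intro P u x hu hux
    obtain ⟨v, hv⟩ := hu.exists_left_inv
    have hm' := P.mul_mem_left v _ hux
    rwa [← mul_assoc, hv, one_mul] at hm'
  set g : A →+* A ⊗[R] Localization.AtPrime p :=
    Algebra.TensorProduct.includeLeftRingHom with hgdef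
  have hprime : ∀ P : TwoSidedIdeal (A ⊗[R] Localization.AtPrime p), P.IsPrimeTS →
      (TwoSidedIdeal.comap g P).IsPrimeTS := by
    intro P hP
    constructor
    · intro htop
      have h1m : (1 : A) ∈ TwoSidedIdeal.comap g P := htop ▸ trivial
      rw [TwoSidedIdeal.mem_comap g, map_one] at h1m
      exact hP.1 (P.one_mem_iff.1 h1m)
    · intro a b hab
      have key : ∀ z, g a * z * g b ∈ P := by
        intro z
        obtain ⟨s, c, hs, hz⟩ := clear_denom p (Localization.AtPrime p) z
        refine hcancel P _ _ (hunit s hs) ?_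
        have e : algebraMap (Localization.AtPrime p) (A ⊗[R] Localization.AtPrime p)
              (algebraMap R (Localization.AtPrime p) s) * (g a * z * g b)
            = g a * (algebraMap (Localization.AtPrime p) (A ⊗[R] Localization.AtPrime p)
              (algebraMap R (Localization.AtPrime p) s) * z) * g b := by
          rw [← mul_assoc, ← mul_assoc, ← mul_assoc, Algebra.commutes]
        rw [e, hz, ← map_mul g, ← map_mul g]
        exact (TwoSidedIdeal.mem_comap g).1 (hab c)
      rcases hP.2 (g a) (g b) key with h | h
      · exact Or.inl ((TwoSidedIdeal.mem_comap g).2 h)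
      · exact Or.inr ((TwoSidedIdeal.mem_comap g).2 h)
  have hctr : ∀ P : TwoSidedIdeal (A ⊗[R] Localization.AtPrime p), P.IsPrimeTS →
      (∀ s ∈ IsLocalRing.maximalIdeal (Localization.AtPrime p),
        algebraMap (Localization.AtPrime p) (A ⊗[R] Localization.AtPrime p) s ∈ P) →
      (TwoSidedIdeal.comap g P).contract (R := R) = p := by
    intro P hP hmP
    have e : ∀ r : R, g (algebraMap R A r) =
        algebraMap (Localization.AtPrime p) (A ⊗[R] Localization.AtPrime p)
          (algebraMap R (Localization.AtPrime p) r) := by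
      intro r
      rw [← IsScalarTower.algebraMap_apply R (Localization.AtPrime p)
        (A ⊗[R] Localization.AtPrime p)]
      show algebraMap R A r ⊗ₜ[R] (1 : Localization.AtPrime p) = _
      rw [Algebra.TensorProduct.algebraMap_apply]
    ext r
    simp only [TwoSidedIdeal.contract, Ideal.mem_comap, TwoSidedIdeal.mem_asIdeal,
      TwoSidedIdeal.mem_comap g]
    constructor
    · intro hr
      by_contra hrp
      have h1m := hcancel P _ 1 (hunit r hrp) (by rw [mul_one, ← e r]; exact hr)
      exact hP.1 (P.one_mem_iff.1 h1m)
    · intro hrp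
      rw [e r]
      exact hmP _ ((IsLocalization.AtPrime.to_map_mem_maximal_iff
        (S := Localization.AtPrime p) (I := p) r).2 hrp)
  have hlift : ∀ P P' : TwoSidedIdeal (A ⊗[R] Localization.AtPrime p),
      TwoSidedIdeal.comap g P = TwoSidedIdeal.comap g P' → P ≤ P' := by
    intro P P' hPP x hx
    obtain ⟨s, a, hs, hxa⟩ := clear_denom p (Localization.AtPrime p) x
    have h1m : g a ∈ P := hxa ▸ P.mul_mem_left _ _ hx
    have h2m : a ∈ TwoSidedIdeal.comap g P := (TwoSidedIdeal.mem_comap g).2 h1m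
    rw [hPP] at h2m
    have h3m : g a ∈ P' := (TwoSidedIdeal.mem_comap g).1 h2m
    exact hcancel P' _ _ (hunit s hs) (hxa ▸ h3m)
  have hps : piSpec R (⟨_, hprime P₁ h1⟩ : PrimeSpectrumNC A) =
      piSpec R (⟨_, hprime P₂ h2⟩ : PrimeSpectrumNC A) := by
    have e1 := hctr P₁ h1 hm1
    have e2 := hctr P₂ h2 hm2
    apply PrimeSpectrum.ext
    show (TwoSidedIdeal.comap g P₁).contract (R := R) =
      (TwoSidedIdeal.comap g P₂).contract (R := R)
    rw [e1, e2]
  have hQeq := hhomeo.3.1 hps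
  have hQeq' : TwoSidedIdeal.comap g P₁ = TwoSidedIdeal.comap g P₂ :=
    congrArg (fun X : PrimeSpectrumNC A => X.1) hQeq
  exact le_antisymm (hlift _ _ hQeq') (hlift _ _ hQeq'.symm)
end
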